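/- arXiv:1903.07807 — 5 statements merged into one kernel-verified Lean document; each statement's English description precedes it below -/
import Mathlib

section
/- Let f_i(ξ) = ½(z_i − H̄_i ξ)ᵀ S_i⁻¹ (z_i − H̄_i ξ) for i = 1,…,N, where each H̄_i = [H_i; I], S_i = diag(R_i, N·P) with R_i and P symmetric positive definite, and z_i = [y_i; x̂]. Then the unique minimizer of F(ξ) = Σᵢ f_i(ξ) over ξ ∈ ℝⁿ equals x̂ + K(y − Hx̂), where H = [H₁; …; H_N], y = [y₁; …; y_N], R = diag(R₁,…,R_N), and K = (P⁻¹ + HᵀR⁻¹H)⁻¹HᵀR⁻¹. -/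
open Matrix

section AuxKalman

private lemma quad_expand' {k : Type*} [Fintype k] (A : Matrix k k ℝ) (hA : Aᵀ = A)
    (a d : k → ℝ) :
    (a - d) ⬝ᵥ A *ᵥ (a - d)
      = a ⬝ᵥ A *ᵥ a - 2 * (d ⬝ᵥ A *ᵥ a) + d ⬝ᵥ A *ᵥ d := by
  have h : a ⬝ᵥ A *ᵥ d = d ⬝ᵥ A *ᵥ a := by
    calc a ⬝ᵥ A *ᵥ d = (A *ᵥ d) ⬝ᵥ a := dotProduct_comm _ _
      _ = (d ᵥ* Aᵀ) ⬝ᵥ a := by rw [vecMul_transpose]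
      _ = d ⬝ᵥ Aᵀ *ᵥ a := (dotProduct_mulVec _ _ _).symm
      _ = d ⬝ᵥ A *ᵥ a := by rw [hA]
  simp only [mulVec_sub, dotProduct_sub, sub_dotProduct, h]
  ring

private lemma mulVec_dot' {k l : Type*} [Fintype k] [Fintype l] (A : Matrix k l ℝ)
    (u : l → ℝ) (w : k → ℝ) : (A *ᵥ u) ⬝ᵥ w = u ⬝ᵥ (Aᵀ *ᵥ w) := by
  rw [dotProduct_mulVec, vecMul_transpose]

private lemma sigma_dot' {N : ℕ} {m : Fin N → ℕ}
    (M : ∀ i, Matrix (Fin (m i)) (Fin (m i)) ℝ)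
    (v : (i : Fin N) × Fin (m i) → ℝ) :
    v ⬝ᵥ (blockDiagonal' M *ᵥ v)
      = ∑ i, (fun a => v ⟨i, a⟩) ⬝ᵥ (M i *ᵥ fun a => v ⟨i, a⟩) := by
  simp only [dotProduct, mulVec]
  rw [← Finset.univ_sigma_univ, Finset.sum_sigma]
  refine Finset.sum_congr rfl fun i _ => Finset.sum_congr rfl fun a _ => ?_
  congr 1
  rw [Finset.sum_sigma]
  rw [Finset.sum_eq_single i]
  · refine Finset.sum_congr rfl fun b _ => ?_
    rw [blockDiagonal'_apply_eq]
  · intro j _ hj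
    refine Finset.sum_eq_zero fun b _ => ?_
    rw [blockDiagonal'_apply_ne _ _ _ (Ne.symm hj), zero_mul]
  · intro h; exact absurd (Finset.mem_univ i) h

private lemma bd_inv' {N : ℕ} {m : Fin N → ℕ}
    (Rl : ∀ i, Matrix (Fin (m i)) (Fin (m i)) ℝ) (h : ∀ i, IsUnit (Rl i)) :
    (blockDiagonal' Rl)⁻¹ = blockDiagonal' fun i => (Rl i)⁻¹ := by
  apply inv_eq_right_inv
  rw [← blockDiagonal'_mul]
  have : (fun i => Rl i * (Rl i)⁻¹) = fun _ => 1 :=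
    funext fun i => mul_nonsing_inv _ ((isUnit_iff_isUnit_det _).mp (h i))
  rw [this]
  exact blockDiagonal'_one

private lemma fb_inv' {a b : Type*} [Fintype a] [Fintype b] [DecidableEq a] [DecidableEq b]
    (A : Matrix a a ℝ) (D : Matrix b b ℝ) (hA : IsUnit A) (hD : IsUnit D) :
    (fromBlocks A 0 0 D)⁻¹ = fromBlocks A⁻¹ 0 0 D⁻¹ := by
  rw [inv_fromBlocks_zero₁₂_of_isUnit_iff A 0 D (iff_of_true hA hD)]
  simp

end AuxKalman

/-- Splitting the centralized Kalman correction cost into `N` local costs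
`fᵢ(ξ) = ½(zᵢ − H̄ᵢξ)ᵀSᵢ⁻¹(zᵢ − H̄ᵢξ)` with `H̄ᵢ = [Hᵢ; I]`, `Sᵢ = diag(Rᵢ, N·P)`,
`zᵢ = [yᵢ; x̂]`: the unique minimizer of `Σᵢ fᵢ(ξ)` equals the centralized Kalman update
`x̂ + K(y − Hx̂)` with `K = (P⁻¹ + HᵀR⁻¹H)⁻¹HᵀR⁻¹`. -/
theorem sum_local_costs_minimizer_eq_centralized_kalman {N n : ℕ} (hN : 0 < N)
    (m : Fin N → ℕ)
    (Hl : ∀ i, Matrix (Fin (m i)) (Fin n) ℝ)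
    (Rl : ∀ i, Matrix (Fin (m i)) (Fin (m i)) ℝ) (hRl : ∀ i, (Rl i).PosDef)
    (P : Matrix (Fin n) (Fin n) ℝ) (hP : P.PosDef)
    (yl : ∀ i, Fin (m i) → ℝ) (xh : Fin n → ℝ)
    (f : Fin N → (Fin n → ℝ) → ℝ)
    (hf : ∀ i ξ, f i ξ =
      (1 / 2) * ((Sum.elim (yl i) xh - (Matrix.fromRows (Hl i) (1 : Matrix (Fin n) (Fin n) ℝ)) *ᵥ ξ) ⬝ᵥ
        ((Matrix.fromBlocks (Rl i) 0 0 ((N : ℝ) • P))⁻¹ *ᵥ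
          (Sum.elim (yl i) xh - (Matrix.fromRows (Hl i) (1 : Matrix (Fin n) (Fin n) ℝ)) *ᵥ ξ))))
    (H : Matrix ((i : Fin N) × Fin (m i)) (Fin n) ℝ)
    (hH : ∀ p k, H p k = Hl p.1 p.2 k)
    (R : Matrix ((i : Fin N) × Fin (m i)) ((i : Fin N) × Fin (m i)) ℝ)
    (hR : R = Matrix.blockDiagonal' Rl)
    (y : (i : Fin N) × Fin (m i) → ℝ) (hy : ∀ p, y p = yl p.1 p.2)
    (K : Matrix (Fin n) ((i : Fin N) × Fin (m i)) ℝ)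
    (hK : K = (P⁻¹ + Hᵀ * R⁻¹ * H)⁻¹ * Hᵀ * R⁻¹) :
    ∀ ξ : Fin n → ℝ, ξ ≠ xh + K *ᵥ (y - H *ᵥ xh) →
      (∑ i, f i (xh + K *ᵥ (y - H *ᵥ xh))) < ∑ i, f i ξ := by
  intro ξ hξ
  have hNR : (N : ℝ) ≠ 0 := Nat.cast_ne_zero.mpr hN.ne'
  haveI : Invertible (N : ℝ) := invertibleOfNonzero hNR
  -- R is positive definite
  have hRpd : R.PosDef := by
    subst hR
    rw [posDef_iff_dotProduct_mulVec]
    constructor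
    · have hh : (fun i => (Rl i)ᴴ) = Rl := funext fun i => (hRl i).isHermitian
      rw [IsHermitian, blockDiagonal'_conjTranspose, hh]
    · intro x hx
      have hstar : star x = x := by
        funext p; simp
      rw [hstar, sigma_dot']
      obtain ⟨p, hp⟩ := Function.ne_iff.mp hx
      refine Finset.sum_pos' (fun i _ => ?_) ⟨p.1, Finset.mem_univ _, ?_⟩
      · have := (hRl i).posSemidef.dotProduct_mulVec_nonneg (fun a => x ⟨i, a⟩)
        simpa using this
      · have hxne : (fun a => x ⟨p.1, a⟩) ≠ 0 := by
          intro hc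
          exact hp (by simpa using congrFun hc p.2)
        have := (hRl p.1).dotProduct_mulVec_pos (x := fun a => x ⟨p.1, a⟩) hxne
        simpa using this
  have hRinv : R⁻¹ = blockDiagonal' fun i => (Rl i)⁻¹ := by
    rw [hR]; exact bd_inv' Rl fun i => (hRl i).isUnit
  -- M := P⁻¹ + HᵀR⁻¹H is positive definite
  set M := P⁻¹ + Hᵀ * R⁻¹ * H with hM
  have hHsemi : (Hᵀ * R⁻¹ * H).PosSemidef := by
    have := hRpd.inv.posSemidef.conjTranspose_mul_mul_same H
    simpa using this
  have hMpd : M.PosDef := hP.inv.add_posSemidef hHsemi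
  -- stationarity: M * K = Hᵀ * R⁻¹
  have hMK : M * K = Hᵀ * R⁻¹ := by
    rw [hK, ← Matrix.mul_assoc, ← Matrix.mul_assoc,
      mul_nonsing_inv _ ((isUnit_iff_isUnit_det _).mp hMpd.isUnit), Matrix.one_mul]
  -- the candidate minimizer and the difference vector
  set e : (i : Fin N) × Fin (m i) → ℝ := y - H *ᵥ xh with he
  set xs : Fin n → ℝ := xh + K *ᵥ e with hxs
  set d : Fin n → ℝ := ξ - xs with hd
  have hdne : d ≠ 0 := sub_ne_zero.mpr hξ
  -- symmetric matrices
  have hRsym : (R⁻¹)ᵀ = R⁻¹ := by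
    have h := hRpd.inv.isHermitian
    rwa [IsHermitian, conjTranspose_eq_transpose_of_trivial] at h
  have hPsym : (P⁻¹)ᵀ = P⁻¹ := by
    have h := hP.inv.isHermitian
    rwa [IsHermitian, conjTranspose_eq_transpose_of_trivial] at h
  -- the global cost function
  set G : (Fin n → ℝ) → ℝ := fun ζ =>
    (1 / 2) * ((y - H *ᵥ ζ) ⬝ᵥ (R⁻¹ *ᵥ (y - H *ᵥ ζ)))
      + (1 / 2) * ((xh - ζ) ⬝ᵥ (P⁻¹ *ᵥ (xh - ζ))) with hG
  -- per-agent formula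
  have hfi : ∀ i ζ, f i ζ =
      (1 / 2) * ((yl i - Hl i *ᵥ ζ) ⬝ᵥ ((Rl i)⁻¹ *ᵥ (yl i - Hl i *ᵥ ζ)))
        + (1 / (2 * N)) * ((xh - ζ) ⬝ᵥ (P⁻¹ *ᵥ (xh - ζ))) := by
    intro i ζ
    rw [hf]
    have hinv : (Matrix.fromBlocks (Rl i) 0 0 ((N : ℝ) • P))⁻¹
        = Matrix.fromBlocks (Rl i)⁻¹ 0 0 ((⅟ (N : ℝ)) • P⁻¹) := by
      rw [fb_inv' _ _ (hRl i).isUnit (by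
        rw [isUnit_iff_isUnit_det, det_smul]
        exact (IsUnit.pow _ (isUnit_iff_ne_zero.mpr hNR)).mul
          (isUnit_iff_ne_zero.mpr hP.det_pos.ne'))]
      rw [Matrix.inv_smul (A := P) _ ((isUnit_iff_isUnit_det P).mp hP.isUnit)]
    have hres : Sum.elim (yl i) xh
        - Matrix.fromRows (Hl i) (1 : Matrix (Fin n) (Fin n) ℝ) *ᵥ ζ
        = Sum.elim (yl i - Hl i *ᵥ ζ) (xh - ζ) := by
      rw [fromRows_mulVec, one_mulVec]
      funext p; cases p <;> simp
    rw [hres, hinv, fromBlocks_mulVec]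
    simp only [Sum.elim_comp_inl, Sum.elim_comp_inr, zero_mulVec, add_zero, zero_add]
    rw [sumElim_dotProduct_sumElim]
    rw [smul_mulVec, dotProduct_smul, invOf_eq_inv]
    field_simp
    rw [smul_eq_mul, mul_add, ← mul_assoc, mul_one_div_cancel hNR, one_mul, mul_comm (N : ℝ)]
  -- the sum of local costs equals the global cost
  have hFG : ∀ ζ, (∑ i, f i ζ) = G ζ := by
    intro ζ
    have hcomp : ∀ i, (fun a => (y - H *ᵥ ζ) ⟨i, a⟩) = yl i - Hl i *ᵥ ζ := by
      intro i; funext a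
      simp [hy, hH, mulVec, dotProduct]
    calc (∑ i, f i ζ)
        = ∑ i, ((1 / 2) * ((yl i - Hl i *ᵥ ζ) ⬝ᵥ ((Rl i)⁻¹ *ᵥ (yl i - Hl i *ᵥ ζ)))
            + (1 / (2 * N)) * ((xh - ζ) ⬝ᵥ (P⁻¹ *ᵥ (xh - ζ)))) :=
          Finset.sum_congr rfl fun i _ => hfi i ζ
      _ = (1 / 2) * (∑ i, (yl i - Hl i *ᵥ ζ) ⬝ᵥ ((Rl i)⁻¹ *ᵥ (yl i - Hl i *ᵥ ζ)))
            + (N : ℝ) * ((1 / (2 * N)) * ((xh - ζ) ⬝ᵥ (P⁻¹ *ᵥ (xh - ζ)))) := by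
          rw [Finset.sum_add_distrib, Finset.mul_sum, Finset.sum_const]
          simp [nsmul_eq_mul]
      _ = G ζ := by
          rw [hG]
          congr 1
          · congr 1
            rw [hRinv, sigma_dot']
            exact (Finset.sum_congr rfl fun i _ => by rw [hcomp i]).symm
          · field_simp
  -- quadratic expansion around the minimizer
  have hyd : y - H *ᵥ ξ = (y - H *ᵥ xs) - H *ᵥ d := by
    rw [hd, mulVec_sub]; abel
  have hxd : xh - ξ = (xh - xs) - d := by rw [hd]; abel
  -- gradient vanishes at xs
  have hgrad : Hᵀ *ᵥ (R⁻¹ *ᵥ (y - H *ᵥ xs)) + P⁻¹ *ᵥ (xh - xs) = 0 := by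
    have h1 : y - H *ᵥ xs = e - H *ᵥ (K *ᵥ e) := by
      rw [hxs, mulVec_add, he]; abel
    have h2 : xh - xs = -(K *ᵥ e) := by rw [hxs]; abel
    rw [h1, h2, mulVec_sub, mulVec_sub, mulVec_neg]
    simp only [mulVec_mulVec]
    have hmat : Hᵀ * (R⁻¹ * (H * K)) + P⁻¹ * K = Hᵀ * R⁻¹ := by
      have h4 : Hᵀ * (R⁻¹ * (H * K)) + P⁻¹ * K = M * K := by
        rw [hM, Matrix.add_mul]
        simp only [Matrix.mul_assoc]
        abel
      rw [h4, hMK]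
    rw [← hmat, add_mulVec]
    abel
  -- difference of costs
  have hdiff : G ξ - G xs = (1 / 2) * (d ⬝ᵥ (M *ᵥ d)) := by
    rw [hG]
    simp only [hyd, hxd]
    rw [quad_expand' _ hRsym, quad_expand' _ hPsym]
    have hA : (H *ᵥ d) ⬝ᵥ (R⁻¹ *ᵥ (y - H *ᵥ xs))
        = d ⬝ᵥ (Hᵀ *ᵥ (R⁻¹ *ᵥ (y - H *ᵥ xs))) := mulVec_dot' _ _ _
    have hB : (H *ᵥ d) ⬝ᵥ (R⁻¹ *ᵥ (H *ᵥ d))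
        = d ⬝ᵥ ((Hᵀ * R⁻¹ * H) *ᵥ d) := by
      rw [mulVec_dot', mulVec_mulVec, mulVec_mulVec]
    have hsum : d ⬝ᵥ (Hᵀ *ᵥ (R⁻¹ *ᵥ (y - H *ᵥ xs))) + d ⬝ᵥ (P⁻¹ *ᵥ (xh - xs)) = 0 := by
      rw [← dotProduct_add, hgrad, dotProduct_zero]
    have hMd : d ⬝ᵥ ((Hᵀ * R⁻¹ * H) *ᵥ d) + d ⬝ᵥ (P⁻¹ *ᵥ d) = d ⬝ᵥ (M *ᵥ d) := by
      rw [← dotProduct_add, hM, add_mulVec]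
      congr 1; abel
    simp only [dotProduct_mulVec] at *
    nlinarith [hA, hB, hsum, hMd]
  -- conclude by positive definiteness
  have hpos : 0 < d ⬝ᵥ (M *ᵥ d) := by
    have := hMpd.dotProduct_mulVec_pos hdne
    have hstar : star d = d := by funext k; simp
    rwa [hstar] at this
  have hlt : 0 < G ξ - G xs := by
    rw [hdiff]
    linarith [hpos]
  rw [hFG ξ, hFG xs]
  linarith [hlt]
end

section
/- Let L be the Laplacian of a connected undirected graph on N vertices with maximum eigenvalue σ_N, let M = diag(M₁, …, M_N) with each Mᵢ an n×n symmetric positive definite matrix, and let à = (L ⊗ Iₙ) M⁻¹ (L ⊗ Iₙ). Then à is symmetric positive semidefinite, ker(Ã) = {1_N ⊗ v : v ∈ ℝⁿ} (so zero is an eigenvalue of multiplicity exactly n), and σ_max(Ã) ≤ σ_N² · maxᵢ ‖Mᵢ⁻¹‖. -/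
open Matrix Kronecker

section Lap
variable {N : ℕ} (a L : Matrix (Fin N) (Fin N) ℝ)
  (hsym : ∀ i j, a i j = a j i) (hdiag : ∀ i, a i i = 0)
  (hL : ∀ i j, L i j = if i = j then ∑ k, a i k else -(a i j))

include hL hdiag in
lemma lap_entry : ∀ i j, L i j = (if i = j then ∑ k, a i k else 0) - a i j := by
  intro i j
  rw [hL]
  by_cases h : i = j
  · subst h; simp [hdiag]
  · simp [h]

include hsym hdiag hL in
lemma lap_quad (x : Fin N → ℝ) :
    2 * (x ⬝ᵥ (L *ᵥ x)) = ∑ i, ∑ j, a i j * (x i - x j) ^ 2 := by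
  have hLe := lap_entry a L hdiag hL
  have h1 : x ⬝ᵥ (L *ᵥ x) =
      ∑ i, ∑ j, (a i j * x i ^ 2 - a i j * x i * x j) := by
    simp only [dotProduct, mulVec, dotProduct, Finset.mul_sum]
    refine Finset.sum_congr rfl fun i _ => ?_
    calc ∑ j, x i * (L i j * x j)
        = ∑ j, ((if i = j then (∑ k, a i k) * (x i * x j) else 0) - a i j * x i * x j) := by
          refine Finset.sum_congr rfl fun j _ => ?_
          rw [hLe]
          by_cases h : i = j
          · subst h; simp; ring
          · simp [h]; ring
      _ = (∑ k, a i k) * (x i * x i) - ∑ j, a i j * x i * x j := by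
          rw [Finset.sum_sub_distrib, Finset.sum_ite_eq Finset.univ i
            (fun j => (∑ k, a i k) * (x i * x j))]
          simp
      _ = ∑ j, (a i j * x i ^ 2 - a i j * x i * x j) := by
          rw [Finset.sum_sub_distrib, Finset.sum_mul]
          congr 1
          exact Finset.sum_congr rfl fun j _ => by ring
  have hswap : ∑ i, ∑ j, a i j * x j ^ 2 = ∑ i, ∑ j, a i j * x i ^ 2 := by
    rw [Finset.sum_comm]
    exact Finset.sum_congr rfl fun i _ => Finset.sum_congr rfl fun j _ => by rw [hsym]
  rw [h1]
  rw [show (∑ i, ∑ j, a i j * (x i - x j) ^ 2)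
      = ∑ i, ∑ j, (a i j * x i ^ 2 + a i j * x j ^ 2 - 2 * (a i j * x i * x j)) from
    Finset.sum_congr rfl fun i _ => Finset.sum_congr rfl fun j _ => by ring]
  simp only [Finset.sum_sub_distrib, Finset.sum_add_distrib, ← Finset.mul_sum]
  rw [hswap]
  ring
end Lap

section More
variable {N : ℕ} {a L : Matrix (Fin N) (Fin N) ℝ}

lemma dp_self_nonneg (x : Fin N → ℝ) : 0 ≤ x ⬝ᵥ x :=
  Finset.sum_nonneg fun i _ => mul_self_nonneg _

lemma lap_psd (hsym : ∀ i j, a i j = a j i) (hnn : ∀ i j, 0 ≤ a i j)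
    (hdiag : ∀ i, a i i = 0)
    (hL : ∀ i j, L i j = if i = j then ∑ k, a i k else -(a i j))
    (x : Fin N → ℝ) : 0 ≤ x ⬝ᵥ (L *ᵥ x) := by
  have h := lap_quad a L hsym hdiag hL x
  nlinarith [Finset.sum_nonneg (s := Finset.univ)
    (f := fun i => ∑ j, a i j * (x i - x j) ^ 2)
    (fun i _ => Finset.sum_nonneg fun j _ => mul_nonneg (hnn i j) (sq_nonneg _))]

lemma lap_ker (hsym : ∀ i j, a i j = a j i) (hnn : ∀ i j, 0 ≤ a i j)
    (hdiag : ∀ i, a i i = 0)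
    (hconn : ∀ i j : Fin N, Relation.ReflTransGen (fun p q => 0 < a p q) i j)
    (hL : ∀ i j, L i j = if i = j then ∑ k, a i k else -(a i j))
    (x : Fin N → ℝ) (hx : L *ᵥ x = 0) : ∀ i j, x i = x j := by
  have h0 : x ⬝ᵥ (L *ᵥ x) = 0 := by rw [hx, dotProduct_zero]
  have h := lap_quad a L hsym hdiag hL x
  rw [h0, mul_zero] at h
  have hterm : ∀ p q : Fin N, 0 < a p q → x p = x q := by
    intro p q hpq
    have h1 : ∀ i ∈ Finset.univ, (0:ℝ) ≤ ∑ j, a i j * (x i - x j) ^ 2 :=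
      fun i _ => Finset.sum_nonneg fun j _ => mul_nonneg (hnn i j) (sq_nonneg _)
    have h2 := (Finset.sum_eq_zero_iff_of_nonneg h1).mp h.symm p (Finset.mem_univ p)
    have h3 := (Finset.sum_eq_zero_iff_of_nonneg
      (fun j _ => mul_nonneg (hnn p j) (sq_nonneg _) : ∀ j ∈ Finset.univ, (0:ℝ) ≤ a p j * (x p - x j) ^ 2)).mp
      h2 q (Finset.mem_univ q)
    have : (x p - x q) ^ 2 = 0 := by
      rcases mul_eq_zero.mp h3 with h' | h'
      · exact absurd h' hpq.ne'
      · exact h'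
    have := pow_eq_zero_iff (n := 2) (by norm_num) |>.mp this
    linarith
  intro i j
  induction hconn i j with
  | refl => rfl
  | tail _ hbc ih => exact ih.trans (hterm _ _ hbc)

lemma lap_rowsum (hdiag : ∀ i, a i i = 0)
    (hL : ∀ i j, L i j = if i = j then ∑ k, a i k else -(a i j)) (i : Fin N) :
    ∑ j, L i j = 0 := by
  have hLe := lap_entry a L hdiag hL
  simp only [hLe, Finset.sum_sub_distrib, Finset.sum_ite_eq Finset.univ i
    (fun _ => ∑ k, a i k)]
  simp

lemma lap_cross (hsymL : Lᵀ = L) (u w : Fin N → ℝ) :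
    u ⬝ᵥ (L *ᵥ w) = w ⬝ᵥ (L *ᵥ u) := by
  rw [dotProduct_mulVec]
  nth_rewrite 1 [← hsymL]
  rw [vecMul_transpose]
  exact dotProduct_comm _ _

lemma lap_sq_bound (hsymL : Lᵀ = L) (hpsd : ∀ x : Fin N → ℝ, 0 ≤ x ⬝ᵥ (L *ᵥ x))
    {σN : ℝ} (hσN : ∀ x : Fin N → ℝ, x ⬝ᵥ (L *ᵥ x) ≤ σN * (x ⬝ᵥ x))
    (x : Fin N → ℝ) : (L *ᵥ x) ⬝ᵥ (L *ᵥ x) ≤ σN ^ 2 * (x ⬝ᵥ x) := by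
  set y := L *ᵥ x with hy
  have hd : x ⬝ᵥ (L *ᵥ y) = y ⬝ᵥ y := by rw [lap_cross hsymL x y, hy]
  have expand : ∀ t : ℝ, (x + t • y) ⬝ᵥ (L *ᵥ (x + t • y)) =
      (y ⬝ᵥ (L *ᵥ y)) * (t * t) + (2 * (x ⬝ᵥ (L *ᵥ y))) * t + (x ⬝ᵥ (L *ᵥ x)) := by
    intro t
    rw [mulVec_add, mulVec_smul]
    simp only [dotProduct_add, add_dotProduct, dotProduct_smul, smul_dotProduct,
      smul_eq_mul]
    rw [lap_cross hsymL y x]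
    ring
  have hdisc := discrim_le_zero (a := y ⬝ᵥ (L *ᵥ y)) (b := 2 * (x ⬝ᵥ (L *ᵥ y)))
    (c := x ⬝ᵥ (L *ᵥ x)) (fun t => by rw [← expand t]; exact hpsd _)
  rw [discrim] at hdisc
  have hcs : (x ⬝ᵥ (L *ᵥ y)) ^ 2 ≤ (x ⬝ᵥ (L *ᵥ x)) * (y ⬝ᵥ (L *ᵥ y)) := by nlinarith
  have hb1 : x ⬝ᵥ (L *ᵥ x) ≤ σN * (x ⬝ᵥ x) := hσN x
  have hb2 : y ⬝ᵥ (L *ᵥ y) ≤ σN * (y ⬝ᵥ y) := hσN y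
  have h1 : (y ⬝ᵥ y) ^ 2 ≤ (σN * (x ⬝ᵥ x)) * (σN * (y ⬝ᵥ y)) := by
    have h1' : (x ⬝ᵥ (L *ᵥ y)) ^ 2 ≤ (σN * (x ⬝ᵥ x)) * (σN * (y ⬝ᵥ y)) :=
      calc (x ⬝ᵥ (L *ᵥ y)) ^ 2 ≤ (x ⬝ᵥ (L *ᵥ x)) * (y ⬝ᵥ (L *ᵥ y)) := hcs
        _ ≤ (σN * (x ⬝ᵥ x)) * (σN * (y ⬝ᵥ y)) :=
          mul_le_mul hb1 hb2 (hpsd y) (le_trans (hpsd x) hb1)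
    rwa [hd] at h1'
  rcases eq_or_lt_of_le (dp_self_nonneg y) with h0 | h0
  · rw [← h0]
    exact mul_nonneg (sq_nonneg σN) (dp_self_nonneg x)
  · have := le_of_mul_le_mul_right (by nlinarith : (y ⬝ᵥ y) * (y ⬝ᵥ y) ≤ (σN ^ 2 * (x ⬝ᵥ x)) * (y ⬝ᵥ y)) h0
    exact this
end More

section Blk
variable {N n : ℕ}

lemma sym_dot {m : Type*} [Fintype m] {A : Matrix m m ℝ} (hA : Aᵀ = A) (u w : m → ℝ) :
    u ⬝ᵥ (A *ᵥ w) = (A *ᵥ u) ⬝ᵥ w := by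
  rw [dotProduct_mulVec]
  nth_rewrite 1 [← hA]
  rw [vecMul_transpose]

lemma blk_quad (C : Fin N → Matrix (Fin n) (Fin n) ℝ)
    (B : Matrix (Fin N × Fin n) (Fin N × Fin n) ℝ)
    (hB : ∀ p q, B p q = if p.1 = q.1 then C p.1 p.2 q.2 else 0)
    (x : Fin N × Fin n → ℝ) :
    x ⬝ᵥ (B *ᵥ x) = ∑ i, (fun j => x (i, j)) ⬝ᵥ (C i *ᵥ fun j => x (i, j)) := by
  simp only [dotProduct, mulVec, dotProduct, Fintype.sum_prod_type, hB]
  refine Finset.sum_congr rfl fun i _ => Finset.sum_congr rfl fun j _ => ?_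
  congr 1
  rw [Finset.sum_comm]
  simp

lemma blk_posDef (M : Fin N → Matrix (Fin n) (Fin n) ℝ) (hM : ∀ i, (M i).PosDef)
    (Mb : Matrix (Fin N × Fin n) (Fin N × Fin n) ℝ)
    (hMb : ∀ p q, Mb p q = if p.1 = q.1 then M p.1 p.2 q.2 else 0) :
    Mb.PosDef := by
  rw [posDef_iff_dotProduct_mulVec]
  constructor
  · ext p q
    rw [conjTranspose_apply, star_trivial, hMb, hMb]
    rcases eq_or_ne p.1 q.1 with h | h
    · rw [if_pos h.symm, if_pos h, h]
      have := congrFun (congrFun (hM q.1).isHermitian q.2) p.2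
      simpa using this.symm
    · rw [if_neg (Ne.symm h), if_neg h]
  · intro x hx
    rw [star_trivial, blk_quad M Mb hMb x]
    obtain ⟨p, hp⟩ : ∃ p, x p ≠ 0 := Function.ne_iff.mp hx
    refine Finset.sum_pos' (fun i _ => ?_) ⟨p.1, Finset.mem_univ _, ?_⟩
    · have := (hM i).posSemidef.dotProduct_mulVec_nonneg (fun j => x (i, j))
      simpa using this
    · have := (hM p.1).dotProduct_mulVec_pos (x := fun j => x (p.1, j)) (fun h => hp (by simpa using congrFun h p.2))
      simpa using this

lemma blk_inv (M : Fin N → Matrix (Fin n) (Fin n) ℝ) (hM : ∀ i, (M i).PosDef)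
    (Mb : Matrix (Fin N × Fin n) (Fin N × Fin n) ℝ)
    (hMb : ∀ p q, Mb p q = if p.1 = q.1 then M p.1 p.2 q.2 else 0) :
    Mb⁻¹ = fun p q => if p.1 = q.1 then (M p.1)⁻¹ p.2 q.2 else 0 := by
  refine inv_eq_right_inv ?_
  ext ⟨i, j⟩ ⟨k, l⟩
  erw [Matrix.mul_apply]
  rw [show ∑ r : Fin N × Fin n, Mb (i, j) r *
      (fun p q : Fin N × Fin n => if p.1 = q.1 then (M p.1)⁻¹ p.2 q.2 else 0) r (k, l)
      = ∑ r₁, ∑ r₂, (if i = r₁ then M i j r₂ else 0) *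
        (if r₁ = k then (M r₁)⁻¹ r₂ l else 0) from by
    rw [Fintype.sum_prod_type]
    exact Finset.sum_congr rfl fun r₁ _ => Finset.sum_congr rfl fun r₂ _ => by
      rw [hMb]]
  have hMM : ∀ i, M i * (M i)⁻¹ = 1 :=
    fun i => Matrix.mul_nonsing_inv _ ((Matrix.isUnit_iff_isUnit_det _).mp (hM i).isUnit)
  rcases eq_or_ne i k with h | h
  · subst h
    rw [show (1 : Matrix (Fin N × Fin n) (Fin N × Fin n) ℝ) (i, j) (i, l)
        = (1 : Matrix (Fin n) (Fin n) ℝ) j l from by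
      simp [Matrix.one_apply, Prod.ext_iff]]
    rw [Finset.sum_eq_single i]
    · have := congrFun (congrFun (hMM i) j) l
      rw [Matrix.mul_apply] at this
      simpa using this
    · intro b _ hb
      refine Finset.sum_eq_zero fun r₂ _ => ?_
      rw [if_neg (Ne.symm hb), zero_mul]
    · intro h; exact absurd (Finset.mem_univ i) h
  · rw [show (1 : Matrix (Fin N × Fin n) (Fin N × Fin n) ℝ) (i, j) (k, l) = 0 from by
      simp [Matrix.one_apply, Prod.ext_iff]; intro h'; exact absurd h' h]
    refine Finset.sum_eq_zero fun r₁ _ => Finset.sum_eq_zero fun r₂ _ => ?_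
    by_cases h' : i = r₁
    · subst h'
      rw [if_neg h, mul_zero]
    · rw [if_neg h', zero_mul]
end Blk

section Kron
open Kronecker
variable {N n : ℕ}

lemma kron_symm {L : Matrix (Fin N) (Fin N) ℝ} (hsymL : Lᵀ = L) :
    (L ⊗ₖ (1 : Matrix (Fin n) (Fin n) ℝ))ᵀ = L ⊗ₖ 1 := by
  have hone : ∀ u w : Fin n, (1 : Matrix (Fin n) (Fin n) ℝ) u w
      = (1 : Matrix (Fin n) (Fin n) ℝ) w u := by
    intro u w
    by_cases h : u = w
    · rw [h]
    · rw [Matrix.one_apply_ne h, Matrix.one_apply_ne (Ne.symm h)]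
  ext ⟨i, j⟩ ⟨k, l⟩
  rw [transpose_apply, kronecker_apply, kronecker_apply,
    show L k i = L i k from congrFun (congrFun hsymL i) k, hone l j]

lemma kron_mulVec (L : Matrix (Fin N) (Fin N) ℝ) (x : Fin N × Fin n → ℝ) (i : Fin N)
    (j : Fin n) :
    ((L ⊗ₖ (1 : Matrix (Fin n) (Fin n) ℝ)) *ᵥ x) (i, j) = ∑ p, L i p * x (p, j) := by
  simp only [mulVec, dotProduct, Fintype.sum_prod_type, kronecker_apply,
    Matrix.one_apply, mul_ite, ite_mul, mul_one, mul_zero, zero_mul,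
    Finset.sum_ite_eq, Finset.mem_univ, if_true]
end Kron


/-- For the Laplacian `L` of a connected undirected graph (max eigenvalue `σN`),
block diagonal `M = diag(M₁,…,M_N)` with `Mᵢ ≻ 0`, and `Ã = (L ⊗ Iₙ)M⁻¹(L ⊗ Iₙ)`:
`Ã` is symmetric PSD, its kernel is `{1_N ⊗ v}`, and `σ_max(Ã) ≤ σN²·maxᵢ‖Mᵢ⁻¹‖`
(stated via quadratic-form bounds). -/
theorem dual_dynamics_matrix_properties {N n : ℕ}
    (a L : Matrix (Fin N) (Fin N) ℝ)
    (hsym : ∀ i j, a i j = a j i)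
    (hnn : ∀ i j, 0 ≤ a i j)
    (hdiag : ∀ i, a i i = 0)
    (hconn : ∀ i j : Fin N, Relation.ReflTransGen (fun p q => 0 < a p q) i j)
    (hL : ∀ i j, L i j = if i = j then ∑ k, a i k else -(a i j))
    (σN : ℝ) (hσN : ∀ x : Fin N → ℝ, x ⬝ᵥ (L *ᵥ x) ≤ σN * (x ⬝ᵥ x))
    (M : Fin N → Matrix (Fin n) (Fin n) ℝ) (hM : ∀ i, (M i).PosDef)
    (Mb : Matrix (Fin N × Fin n) (Fin N × Fin n) ℝ)
    (hMb : ∀ p q, Mb p q = if p.1 = q.1 then M p.1 p.2 q.2 else 0)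
    (mB : ℝ) (hmB : ∀ (i : Fin N) (x : Fin n → ℝ), x ⬝ᵥ ((M i)⁻¹ *ᵥ x) ≤ mB * (x ⬝ᵥ x))
    (At : Matrix (Fin N × Fin n) (Fin N × Fin n) ℝ)
    (hAt : At = (L ⊗ₖ (1 : Matrix (Fin n) (Fin n) ℝ)) * Mb⁻¹ *
      (L ⊗ₖ (1 : Matrix (Fin n) (Fin n) ℝ))) :
    At.PosSemidef ∧
    (∀ x : Fin N × Fin n → ℝ, At *ᵥ x = 0 ↔ ∃ v : Fin n → ℝ, x = fun p => v p.2) ∧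
    (∀ x : Fin N × Fin n → ℝ, x ⬝ᵥ (At *ᵥ x) ≤ (σN ^ 2 * mB) * (x ⬝ᵥ x)) := by
  classical
  set K := L ⊗ₖ (1 : Matrix (Fin n) (Fin n) ℝ) with hK
  have hsymL : Lᵀ = L := by
    ext i j
    rw [transpose_apply, hL, hL]
    by_cases h : i = j
    · subst h; rfl
    · rw [if_neg (Ne.symm h), if_neg h, hsym]
  have hKsym : Kᵀ = K := kron_symm hsymL
  have hKherm : Kᴴ = K := by
    ext p q
    rw [conjTranspose_apply, star_trivial]
    exact congrFun (congrFun hKsym p) q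
  have hMbPD := blk_posDef M hM Mb hMb
  have hMbInvPD : (Mb⁻¹).PosDef := hMbPD.inv
  have hMbInv := blk_inv M hM Mb hMb
  have hpsd : At.PosSemidef := by
    rw [hAt]
    nth_rewrite 1 [← hKherm]
    exact PosSemidef.conjTranspose_mul_mul_same hMbInvPD.posSemidef K
  have hquad : ∀ x, x ⬝ᵥ (At *ᵥ x) = (K *ᵥ x) ⬝ᵥ (Mb⁻¹ *ᵥ (K *ᵥ x)) := by
    intro x
    rw [hAt, ← Matrix.mulVec_mulVec, ← Matrix.mulVec_mulVec, sym_dot hKsym]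
  have hKx : ∀ (x : Fin N × Fin n → ℝ) i j, (K *ᵥ x) (i, j) = ∑ p, L i p * x (p, j) :=
    fun x i j => kron_mulVec L x i j
  refine ⟨hpsd, fun x => ⟨?_, ?_⟩, ?_⟩
  · -- kernel forward
    intro hx
    have h0 : (K *ᵥ x) ⬝ᵥ (Mb⁻¹ *ᵥ (K *ᵥ x)) = 0 := by
      rw [← hquad x, hx, dotProduct_zero]
    have hKx0 : K *ᵥ x = 0 := by
      by_contra hne
      have := hMbInvPD.dotProduct_mulVec_pos hne
      rw [star_trivial, h0] at this
      exact lt_irrefl 0 this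
    have hcol : ∀ j i i', x (i, j) = x (i', j) := by
      intro j
      have hLc : L *ᵥ (fun i => x (i, j)) = 0 := by
        funext i
        have h1 := congrFun hKx0 (i, j)
        rw [hKx x i j] at h1
        simpa [mulVec, dotProduct] using h1
      exact lap_ker hsym hnn hdiag hconn hL _ hLc
    rcases Nat.eq_zero_or_pos N with hN | hN
    · exact ⟨fun _ => 0, funext fun p => absurd p.1.isLt (by omega)⟩
    · exact ⟨fun j => x (⟨0, hN⟩, j), funext fun p => hcol p.2 p.1 ⟨0, hN⟩⟩
  · -- kernel backward
    rintro ⟨v, rfl⟩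
    have hKx0 : K *ᵥ (fun p => v p.2) = 0 := by
      funext p
      obtain ⟨i, j⟩ := p
      rw [hKx _ i j]
      show ∑ p, L i p * v j = 0
      rw [← Finset.sum_mul, lap_rowsum hdiag hL i, zero_mul]
    rw [hAt, ← Matrix.mulVec_mulVec, ← Matrix.mulVec_mulVec, hKx0, mulVec_zero,
      mulVec_zero]
  · -- bound
    intro x
    by_cases hNE : Nonempty (Fin N × Fin n)
    swap
    · haveI := not_nonempty_iff.mp hNE
      simp [dotProduct]
    obtain ⟨⟨i0, j0⟩⟩ := hNE
    have hmB0 : 0 < mB := by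
      set e : Fin n → ℝ := fun _ => 1 with he
      have hepos : 0 < e ⬝ᵥ ((M i0)⁻¹ *ᵥ e) := by
        have := (hM i0).inv.dotProduct_mulVec_pos (x := e) (fun h => one_ne_zero (congrFun h j0))
        simpa using this
      have hee : e ⬝ᵥ e = (n : ℝ) := by simp [dotProduct, he]
      have hn0 : 0 < (n : ℝ) := by exact_mod_cast j0.pos
      nlinarith [hmB i0 e]
    have hform : x ⬝ᵥ (At *ᵥ x) =
        ∑ i, (fun j => (K *ᵥ x) (i, j)) ⬝ᵥ ((M i)⁻¹ *ᵥ fun j => (K *ᵥ x) (i, j)) := by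
      rw [hquad x, blk_quad (fun i => (M i)⁻¹) Mb⁻¹ (fun p q => by rw [hMbInv]) (K *ᵥ x)]
    have hKK : (K *ᵥ x) ⬝ᵥ (K *ᵥ x) =
        ∑ i, (fun j => (K *ᵥ x) (i, j)) ⬝ᵥ (fun j => (K *ᵥ x) (i, j)) := by
      simp [dotProduct, Fintype.sum_prod_type]
    have hstep1 : x ⬝ᵥ (At *ᵥ x) ≤ mB * ((K *ᵥ x) ⬝ᵥ (K *ᵥ x)) := by
      rw [hform, hKK, Finset.mul_sum]
      exact Finset.sum_le_sum fun i _ => hmB i _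
    have hstep2 : (K *ᵥ x) ⬝ᵥ (K *ᵥ x) ≤ σN ^ 2 * (x ⬝ᵥ x) := by
      have hLc : ∀ j : Fin n, (fun i => (K *ᵥ x) (i, j)) = L *ᵥ (fun i => x (i, j)) := by
        intro j
        funext i
        rw [hKx x i j]
        simp [mulVec, dotProduct]
      calc (K *ᵥ x) ⬝ᵥ (K *ᵥ x)
          = ∑ j : Fin n, (fun i => (K *ᵥ x) (i, j)) ⬝ᵥ (fun i => (K *ᵥ x) (i, j)) := by
            simp only [dotProduct, Fintype.sum_prod_type]
            rw [Finset.sum_comm]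
        _ ≤ ∑ j : Fin n, σN ^ 2 * ((fun i => x (i, j)) ⬝ᵥ (fun i => x (i, j))) := by
            refine Finset.sum_le_sum fun j _ => ?_
            rw [hLc j]
            exact lap_sq_bound hsymL (lap_psd hsym hnn hdiag hL) hσN _
        _ = σN ^ 2 * (x ⬝ᵥ x) := by
            rw [← Finset.mul_sum]
            congr 1
            simp only [dotProduct, Fintype.sum_prod_type]
            rw [Finset.sum_comm]
    calc x ⬝ᵥ (At *ᵥ x) ≤ mB * ((K *ᵥ x) ⬝ᵥ (K *ᵥ x)) := hstep1
      _ ≤ mB * (σN ^ 2 * (x ⬝ᵥ x)) := mul_le_mul_of_nonneg_left hstep2 hmB0.le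
      _ = (σN ^ 2 * mB) * (x ⬝ᵥ x) := by ring
end

section
/- Consider the dual ascent iteration ξ_{l+1} = M⁻¹(c − L̄λ_l), λ_{l+1} = λ_l + α L̄ ξ_{l+1}, where M is symmetric positive definite block diagonal, L̄ = L ⊗ Iₙ for the Laplacian L of a connected undirected graph, c ∈ ℝ^{Nn}, and 0 < α < 2/(σ_max(L)² ‖M⁻¹‖). Then λ_l converges to λ∞ = λ* + (U₁U₁ᵀ ⊗ Iₙ)(λ₀ − λ*), where λ* is any KKT dual solution and U₁ = (1/√N)1_N; and ξ_l converges to the unique primal solution ξ* of minimizing ½ξᵀMξ − cᵀξ subject to L̄ξ = 0. -/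
open Matrix Kronecker

section Aux
variable {V : Type*} [Fintype V] [DecidableEq V]

noncomputable def evv {A : Matrix V V ℝ} (hA : A.IsHermitian) (j : V) : V → ℝ :=
  hA.eigenvectorBasis j

lemma evv_dot {A : Matrix V V ℝ} (hA : A.IsHermitian) (i j : V) :
    evv hA i ⬝ᵥ evv hA j = if i = j then 1 else 0 := by
  have h := orthonormal_iff_ite.mp hA.eigenvectorBasis.orthonormal i j
  rw [← h]
  simp [evv, PiLp.inner_apply, dotProduct, RCLike.inner_apply, mul_comm]

lemma mulVec_evv {A : Matrix V V ℝ} (hA : A.IsHermitian) (j : V) :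
    A *ᵥ evv hA j = hA.eigenvalues j • evv hA j :=
  hA.mulVec_eigenvectorBasis j

lemma evv_expand {A : Matrix V V ℝ} (hA : A.IsHermitian) (x : V → ℝ) :
    x = ∑ j, (evv hA j ⬝ᵥ x) • evv hA j := by
  have h := hA.eigenvectorBasis.sum_repr (WithLp.toLp 2 x)
  have h2 : ∀ j, hA.eigenvectorBasis.repr (WithLp.toLp 2 x) j = evv hA j ⬝ᵥ x := by
    intro j
    rw [OrthonormalBasis.repr_apply_apply]
    simp [evv, PiLp.inner_apply, dotProduct, RCLike.inner_apply, mul_comm]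
  have h3 := congrArg WithLp.ofLp h.symm
  simp only [h2, WithLp.ofLp_sum, WithLp.ofLp_smul, WithLp.ofLp_toLp] at h3
  exact h3

lemma sum_dotProduct' {ι : Type*} (s : Finset ι) (f : ι → V → ℝ) (y : V → ℝ) :
    (∑ j ∈ s, f j) ⬝ᵥ y = ∑ j ∈ s, f j ⬝ᵥ y := by
  simp only [dotProduct, Finset.sum_apply, Finset.sum_mul]
  rw [Finset.sum_comm]

lemma dotProduct_sum' {ι : Type*} (s : Finset ι) (x : V → ℝ) (f : ι → V → ℝ) :
    x ⬝ᵥ (∑ j ∈ s, f j) = ∑ j ∈ s, x ⬝ᵥ f j := by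
  simp only [dotProduct, Finset.sum_apply, Finset.mul_sum]
  rw [Finset.sum_comm]

lemma dot_sum_sum {A : Matrix V V ℝ} (hA : A.IsHermitian) (d d' : V → ℝ) :
    (∑ j, d j • evv hA j) ⬝ᵥ (∑ j, d' j • evv hA j) = ∑ j, d j * d' j := by
  rw [sum_dotProduct']
  simp only [dotProduct_sum', smul_dotProduct, dotProduct_smul, evv_dot, smul_eq_mul]
  refine Finset.sum_congr rfl fun j _ => ?_
  rw [Finset.sum_eq_single j] <;> simp +contextual [eq_comm]

lemma mulVec_sum_evv {A : Matrix V V ℝ} (hA : A.IsHermitian) (d : V → ℝ) :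
    A *ᵥ (∑ j, d j • evv hA j) = ∑ j, (hA.eigenvalues j * d j) • evv hA j := by
  have : A *ᵥ (∑ j, d j • evv hA j) = ∑ j, d j • (A *ᵥ evv hA j) := by
    simpa only [Matrix.mulVecLin_apply] using map_sum A.mulVecLin (fun j => d j • evv hA j) Finset.univ |>.trans
      (Finset.sum_congr rfl fun j _ => by rw [_root_.map_smul, Matrix.mulVecLin_apply])
  rw [this]
  refine Finset.sum_congr rfl fun j _ => ?_
  rw [mulVec_evv, smul_smul, mul_comm (d j)]

lemma eigenvalue_formula {A : Matrix V V ℝ} (hA : A.IsHermitian) (j : V) :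
    hA.eigenvalues j = evv hA j ⬝ᵥ (A *ᵥ evv hA j) := by
  rw [mulVec_evv, dotProduct_smul, smul_eq_mul, evv_dot]
  simp

lemma quad_eq_sum {A : Matrix V V ℝ} (hA : A.IsHermitian) (x : V → ℝ) :
    x ⬝ᵥ (A *ᵥ x) = ∑ j, hA.eigenvalues j * (evv hA j ⬝ᵥ x) ^ 2 := by
  conv_lhs => rw [evv_expand hA x, mulVec_sum_evv, dot_sum_sum]
  refine Finset.sum_congr rfl fun j _ => by ring

lemma dot_self_eq_sum {A : Matrix V V ℝ} (hA : A.IsHermitian) (x : V → ℝ) :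
    x ⬝ᵥ x = ∑ j, (evv hA j ⬝ᵥ x) ^ 2 := by
  conv_lhs => rw [evv_expand hA x, dot_sum_sum]
  refine Finset.sum_congr rfl fun j _ => by ring

lemma sq_quad_le {A : Matrix V V ℝ} (hA : A.IsHermitian) {σ : ℝ}
    (h0 : ∀ x, 0 ≤ x ⬝ᵥ (A *ᵥ x)) (hup : ∀ x, x ⬝ᵥ (A *ᵥ x) ≤ σ * (x ⬝ᵥ x)) (x : V → ℝ) :
    (A *ᵥ x) ⬝ᵥ (A *ᵥ x) ≤ σ ^ 2 * (x ⬝ᵥ x) := by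
  have hev : ∀ j, 0 ≤ hA.eigenvalues j ∧ hA.eigenvalues j ≤ σ := by
    intro j
    have h1 := eigenvalue_formula hA j
    have h2 := hup (evv hA j)
    have h3 : evv hA j ⬝ᵥ evv hA j = 1 := by rw [evv_dot]; simp
    constructor
    · rw [h1]; exact h0 _
    · rw [h1]; rw [h3] at h2; linarith
  conv_lhs => rw [evv_expand hA x, mulVec_sum_evv, dot_sum_sum]
  rw [dot_self_eq_sum hA x, Finset.mul_sum]
  refine Finset.sum_le_sum fun j _ => ?_
  obtain ⟨h1, h2⟩ := hev j
  nlinarith [mul_self_le_mul_self h1 h2, sq_nonneg (evv hA j ⬝ᵥ x)]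

omit [DecidableEq V] in
lemma mulVec_tendsto (A : Matrix V V ℝ) {x : ℕ → V → ℝ} {y : V → ℝ}
    (h : Filter.Tendsto x Filter.atTop (nhds y)) :
    Filter.Tendsto (fun l => A *ᵥ x l) Filter.atTop (nhds (A *ᵥ y)) := by
  rw [tendsto_pi_nhds] at h ⊢
  intro p
  simp only [Matrix.mulVec, dotProduct]
  exact tendsto_finset_sum _ fun q _ => ((h q).const_mul _)

end Aux


lemma laplacian_quad {N : ℕ} (a L : Matrix (Fin N) (Fin N) ℝ)
    (hsym : ∀ i j, a i j = a j i)
    (hdiag : ∀ i, a i i = 0)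
    (hL : ∀ i j, L i j = if i = j then ∑ k, a i k else -(a i j))
    (y : Fin N → ℝ) :
    y ⬝ᵥ (L *ᵥ y) = (1/2) * ∑ i, ∑ j, a i j * (y i - y j)^2 := by
  have key : ∀ i j, y i * (L i j * y j)
      = (if i = j then (∑ k, a i k + a i j) * (y i * y j) else 0) - a i j * (y i * y j) := by
    intro i j
    rw [hL]
    rcases eq_or_ne i j with rfl | h
    · simp; ring
    · simp [h]; ring
  have lhs : y ⬝ᵥ (L *ᵥ y) = (∑ i, ∑ j, a i j * y i ^ 2) - ∑ i, ∑ j, a i j * (y i * y j) := by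
    simp only [dotProduct, Matrix.mulVec, Finset.mul_sum, key, Finset.sum_sub_distrib,
      Finset.sum_ite_eq, Finset.mem_univ, if_true]
    rw [← Finset.sum_sub_distrib, ← Finset.sum_sub_distrib]
    refine Finset.sum_congr rfl fun i _ => ?_
    rw [hdiag, add_zero, mul_comm (y i) (y i), ← sq, Finset.sum_mul]
  have swap : ∑ i, ∑ j, a i j * y j ^ 2 = ∑ i, ∑ j, a i j * y i ^ 2 := by
    rw [Finset.sum_comm]
    refine Finset.sum_congr rfl fun i _ => Finset.sum_congr rfl fun j _ => by rw [hsym]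
  have expand : ∑ i, ∑ j, a i j * (y i - y j)^2
      = (∑ i, ∑ j, a i j * y i ^2) + (∑ i, ∑ j, a i j * y j ^2)
        - 2 * ∑ i, ∑ j, a i j * (y i * y j) := by
    have e : ∀ i j, a i j * (y i - y j)^2
        = a i j * y i^2 + a i j * y j^2 - 2*(a i j * (y i*y j)) := fun i j => by ring
    simp only [e, Finset.sum_sub_distrib, Finset.sum_add_distrib, ← Finset.mul_sum]
  rw [lhs, expand, swap]
  ring

/-- Lemma 2: the dual ascent iteration `ξ_{l+1} = M⁻¹(c − L̄λ_l)`,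
`λ_{l+1} = λ_l + αL̄ξ_{l+1}` with step size `0 < α < 2/(σ_max(L)²‖M⁻¹‖)` satisfies:
`λ_l → λ* + (U₁U₁ᵀ ⊗ Iₙ)(λ₀ − λ*)`, and `ξ_l` converges to the unique primal
solution `ξ*` of `min ½ξᵀMξ − cᵀξ s.t. L̄ξ = 0`. -/
theorem dual_ascent_convergence {N n : ℕ} (hN : 0 < N)
    (a L : Matrix (Fin N) (Fin N) ℝ)
    (hsym : ∀ i j, a i j = a j i)
    (hnn : ∀ i j, 0 ≤ a i j)
    (hdiag : ∀ i, a i i = 0)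
    (hconn : ∀ i j : Fin N, Relation.ReflTransGen (fun p q => 0 < a p q) i j)
    (hL : ∀ i j, L i j = if i = j then ∑ k, a i k else -(a i j))
    (σN : ℝ) (hσN : ∀ x : Fin N → ℝ, x ⬝ᵥ (L *ᵥ x) ≤ σN * (x ⬝ᵥ x)) (hσpos : 0 < σN)
    (M : Fin N → Matrix (Fin n) (Fin n) ℝ) (hM : ∀ i, (M i).PosDef)
    (Mb : Matrix (Fin N × Fin n) (Fin N × Fin n) ℝ)
    (hMb : ∀ p q, Mb p q = if p.1 = q.1 then M p.1 p.2 q.2 else 0)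
    (mB : ℝ) (hmB : ∀ x : Fin N × Fin n → ℝ, x ⬝ᵥ (Mb⁻¹ *ᵥ x) ≤ mB * (x ⬝ᵥ x))
    (hmBpos : 0 < mB)
    (Lb : Matrix (Fin N × Fin n) (Fin N × Fin n) ℝ)
    (hLb : Lb = L ⊗ₖ (1 : Matrix (Fin n) (Fin n) ℝ))
    (c : Fin N × Fin n → ℝ)
    (α : ℝ) (hα : 0 < α) (hαstep : α < 2 / (σN ^ 2 * mB))
    (ξ lam : ℕ → Fin N × Fin n → ℝ)
    (hiter1 : ∀ l, ξ (l + 1) = Mb⁻¹ *ᵥ (c - Lb *ᵥ lam l))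
    (hiter2 : ∀ l, lam (l + 1) = lam l + α • (Lb *ᵥ ξ (l + 1)))
    (ξs lams : Fin N × Fin n → ℝ)
    (hKKT1 : Mb *ᵥ ξs + Lb *ᵥ lams = c)
    (hKKT2 : Lb *ᵥ ξs = 0) :
    Filter.Tendsto lam Filter.atTop
      (nhds (lams + fun p => (N : ℝ)⁻¹ * ∑ j, (lam 0 (j, p.2) - lams (j, p.2)))) ∧
    Filter.Tendsto ξ Filter.atTop (nhds ξs) ∧
    (∀ ζ : Fin N × Fin n → ℝ, Lb *ᵥ ζ = 0 → ζ ≠ ξs →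
      (1 / 2) * (ξs ⬝ᵥ (Mb *ᵥ ξs)) - c ⬝ᵥ ξs
        < (1 / 2) * (ζ ⬝ᵥ (Mb *ᵥ ζ)) - c ⬝ᵥ ζ) := by
  classical
  -- block formulas for mulVec
  have hMbmul : ∀ (x : Fin N × Fin n → ℝ) i k,
      (Mb *ᵥ x) (i, k) = ∑ m, M i k m * x (i, m) := by
    intro x i k
    simp only [Matrix.mulVec, dotProduct, Fintype.sum_prod_type, hMb, ite_mul, zero_mul]
    rw [Finset.sum_comm]
    simp
  have hLbmul : ∀ (x : Fin N × Fin n → ℝ) i k,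
      (Lb *ᵥ x) (i, k) = ∑ j, L i j * x (j, k) := by
    intro x i k
    simp only [Matrix.mulVec, dotProduct, Fintype.sum_prod_type, hLb,
      Matrix.kroneckerMap_apply, Matrix.one_apply, mul_ite, mul_one, mul_zero, ite_mul, zero_mul]
    refine Finset.sum_congr rfl fun j _ => ?_
    simp
  -- symmetry of L
  have hLsym : ∀ i j, L i j = L j i := by
    intro i j
    rcases eq_or_ne i j with rfl | h
    · rfl
    · rw [hL, hL, if_neg h, if_neg (Ne.symm h), hsym]
  -- row sums of L vanish
  have hLrow : ∀ i, ∑ j, L i j = 0 := by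
    intro i
    have h1 : ∀ j, L i j = (if i = j then (∑ k, a i k) + a i j else 0) - a i j := by
      intro j
      rw [hL]
      rcases eq_or_ne i j with rfl | h
      · simp [hdiag]
      · simp [h]
    simp only [h1, Finset.sum_sub_distrib, Finset.sum_ite_eq, Finset.mem_univ, if_true]
    simp [hdiag]
  have hLcol : ∀ j, ∑ i, L i j = 0 := by
    intro j
    calc ∑ i, L i j = ∑ i, L j i := Finset.sum_congr rfl fun i _ => (hLsym j i).symm
    _ = 0 := hLrow j
  have hquadL := laplacian_quad a L hsym hdiag hL
  have hLpsd : ∀ y : Fin N → ℝ, 0 ≤ y ⬝ᵥ (L *ᵥ y) := by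
    intro y
    rw [hquadL]
    have : 0 ≤ ∑ i, ∑ j, a i j * (y i - y j)^2 :=
      Finset.sum_nonneg fun i _ => Finset.sum_nonneg fun j _ =>
        mul_nonneg (hnn i j) (sq_nonneg _)
    linarith
  -- block quadratic form for Lb
  have hquadLb : ∀ x : Fin N × Fin n → ℝ,
      x ⬝ᵥ (Lb *ᵥ x) = ∑ k, (fun i => x (i, k)) ⬝ᵥ (L *ᵥ fun i => x (i, k)) := by
    intro x
    simp only [dotProduct, Matrix.mulVec, Fintype.sum_prod_type]
    rw [Finset.sum_comm]
    refine Finset.sum_congr rfl fun k _ => Finset.sum_congr rfl fun i _ => ?_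
    congr 1
    have := hLbmul x i k
    simpa [Matrix.mulVec, dotProduct, Fintype.sum_prod_type] using this
  have hdotprod : ∀ x : Fin N × Fin n → ℝ,
      x ⬝ᵥ x = ∑ k, (fun i => x (i, k)) ⬝ᵥ (fun i => x (i, k)) := by
    intro x
    simp only [dotProduct, Fintype.sum_prod_type]
    rw [Finset.sum_comm]
  have hLb0 : ∀ x : Fin N × Fin n → ℝ, 0 ≤ x ⬝ᵥ (Lb *ᵥ x) := by
    intro x
    rw [hquadLb]
    exact Finset.sum_nonneg fun k _ => hLpsd _
  have hLbup : ∀ x : Fin N × Fin n → ℝ, x ⬝ᵥ (Lb *ᵥ x) ≤ σN * (x ⬝ᵥ x) := by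
    intro x
    rw [hquadLb, hdotprod, Finset.mul_sum]
    exact Finset.sum_le_sum fun k _ => hσN _
  -- Mb facts
  have hMbherm : Mb.IsHermitian := by
    ext p q
    simp only [Matrix.conjTranspose_apply, star_trivial, hMb]
    rcases eq_or_ne q.1 p.1 with h | h
    · rw [if_pos h, if_pos h.symm, h]
      have h2 := congrFun (congrFun (hM p.1).1 p.2) q.2
      simpa [Matrix.conjTranspose_apply] using h2
    · rw [if_neg h, if_neg (Ne.symm h)]
  have hMbquad : ∀ x : Fin N × Fin n → ℝ,
      x ⬝ᵥ (Mb *ᵥ x) = ∑ i, (fun k => x (i,k)) ⬝ᵥ (M i *ᵥ fun k => x (i,k)) := by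
    intro x
    simp only [dotProduct, Fintype.sum_prod_type]
    refine Finset.sum_congr rfl fun i _ => Finset.sum_congr rfl fun k _ => ?_
    rw [hMbmul x i k]
    rfl
  have hMbPD : Mb.PosDef := by
    refine Matrix.PosDef.of_dotProduct_mulVec_pos hMbherm fun x hx => ?_
    rw [star_trivial, hMbquad]
    have hnonneg : ∀ i, (0:ℝ) ≤ (fun k => x (i,k)) ⬝ᵥ (M i *ᵥ fun k => x (i,k)) := by
      intro i
      simpa [star_trivial] using (hM i).posSemidef.dotProduct_mulVec_nonneg (fun k => x (i,k))
    obtain ⟨p, hp⟩ : ∃ p, x p ≠ 0 := by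
      by_contra h
      push_neg at h
      exact hx (funext h)
    refine Finset.sum_pos' (fun i _ => hnonneg i) ⟨p.1, Finset.mem_univ _, ?_⟩
    have hxe : (fun k => x (p.1, k)) ≠ 0 := by
      intro h0
      exact hp (congrFun h0 p.2)
    simpa [star_trivial] using (hM p.1).dotProduct_mulVec_pos hxe
  have hMbdet : IsUnit Mb.det := isUnit_iff_ne_zero.mpr hMbPD.det_pos.ne'
  have hMbinvPD : Mb⁻¹.PosDef := hMbPD.inv
  have hMinvM : ∀ v, Mb⁻¹ *ᵥ (Mb *ᵥ v) = v := by
    intro v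
    rw [Matrix.mulVec_mulVec, Matrix.nonsing_inv_mul Mb hMbdet, Matrix.one_mulVec]
  have hMMinv : ∀ v, Mb *ᵥ (Mb⁻¹ *ᵥ v) = v := by
    intro v
    rw [Matrix.mulVec_mulVec, Matrix.mul_nonsing_inv Mb hMbdet, Matrix.one_mulVec]
  -- Lb hermitian
  have hLbT : Lbᵀ = Lb := by
    ext p q
    rw [Matrix.transpose_apply, hLb]
    simp only [Matrix.kroneckerMap_apply, Matrix.one_apply]
    rw [hLsym]
    rcases eq_or_ne p.2 q.2 with h | h
    · simp [h]
    · simp [h, Ne.symm h]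
  have hLbherm : Lb.IsHermitian := by
    have : Lbᴴ = Lbᵀ := by
      ext p q
      simp [Matrix.conjTranspose_apply, Matrix.transpose_apply]
    rw [Matrix.IsHermitian, this, hLbT]
  -- S
  set S := Lb * Mb⁻¹ * Lb with hSdef
  have hSpsd : S.PosSemidef := by
    have h := hMbinvPD.posSemidef.mul_mul_conjTranspose_same Lb
    rwa [hLbherm] at h
  -- error recursion
  have herec : ∀ l, lam (l+1) - lams
      = (lam l - lams) - α • (S *ᵥ (lam l - lams)) := by
    intro l
    rw [hiter2, hiter1]
    have h1 : c - Lb *ᵥ lam l = Mb *ᵥ ξs - Lb *ᵥ (lam l - lams) := by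
      rw [← hKKT1, Matrix.mulVec_sub]
      abel
    rw [h1, Matrix.mulVec_sub Mb⁻¹, hMinvM, Matrix.mulVec_sub Lb, hKKT2]
    rw [Matrix.mulVec_mulVec, Matrix.mulVec_mulVec]
    rw [smul_sub, smul_zero]
    abel
  -- quadratic form of S
  have hquadS : ∀ x : Fin N × Fin n → ℝ,
      x ⬝ᵥ (S *ᵥ x) = (Lb *ᵥ x) ⬝ᵥ (Mb⁻¹ *ᵥ (Lb *ᵥ x)) := by
    intro x
    have h1 : S *ᵥ x = Lb *ᵥ (Mb⁻¹ *ᵥ (Lb *ᵥ x)) := by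
      rw [Matrix.mulVec_mulVec, Matrix.mulVec_mulVec]
    rw [h1, Matrix.dotProduct_mulVec, ← Matrix.mulVec_transpose, hLbT]
  have hSherm : S.IsHermitian := hSpsd.1
  -- eigenvalue bounds
  have hmu0 : ∀ j, 0 ≤ hSherm.eigenvalues j := by
    intro j
    rw [eigenvalue_formula]
    simpa [star_trivial] using hSpsd.dotProduct_mulVec_nonneg (evv hSherm j)
  have hmuup : ∀ j, hSherm.eigenvalues j ≤ σN ^ 2 * mB := by
    intro j
    rw [eigenvalue_formula, hquadS]
    have h1 := hmB (Lb *ᵥ evv hSherm j)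
    have h2 := sq_quad_le hLbherm hLb0 hLbup (evv hSherm j)
    have h3 : evv hSherm j ⬝ᵥ evv hSherm j = 1 := by rw [evv_dot]; simp
    rw [h3, mul_one] at h2
    calc (Lb *ᵥ evv hSherm j) ⬝ᵥ (Mb⁻¹ *ᵥ (Lb *ᵥ evv hSherm j))
        ≤ mB * ((Lb *ᵥ evv hSherm j) ⬝ᵥ (Lb *ᵥ evv hSherm j)) := h1
      _ ≤ mB * σN ^ 2 := by nlinarith
      _ = σN ^ 2 * mB := by ring
  -- series form of the error
  set e0 : Fin N × Fin n → ℝ := lam 0 - lams with he0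
  set cj : Fin N × Fin n → ℝ := fun j => evv hSherm j ⬝ᵥ e0 with hcj
  have hform : ∀ l, lam l - lams
      = ∑ j, ((1 - α * hSherm.eigenvalues j) ^ l * cj j) • evv hSherm j := by
    intro l
    induction l with
    | zero => simpa using evv_expand hSherm e0
    | succ l ih =>
      rw [herec l, ih, mulVec_sum_evv, Finset.smul_sum, ← Finset.sum_sub_distrib]
      refine Finset.sum_congr rfl fun j _ => ?_
      rw [smul_smul, ← sub_smul]
      congr 1
      ring
  -- contraction
  have hcontract : ∀ j, hSherm.eigenvalues j ≠ 0 → |1 - α * hSherm.eigenvalues j| < 1 := by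
    intro j hj
    have h0 : 0 < hSherm.eigenvalues j := lt_of_le_of_ne (hmu0 j) (Ne.symm hj)
    have hσm : 0 < σN ^ 2 * mB := by positivity
    have hb : α * (σN ^ 2 * mB) < 2 := by
      rw [← lt_div_iff₀ hσm] at *
      exact hαstep
    have hb2 : α * hSherm.eigenvalues j < 2 := by nlinarith [hmuup j]
    rw [abs_lt]
    constructor <;> nlinarith [mul_pos hα h0]
  -- the limit of the error
  set w : Fin N × Fin n → ℝ :=
    ∑ j, (if hSherm.eigenvalues j = 0 then cj j else 0) • evv hSherm j with hw
  have hlamtend : Filter.Tendsto lam Filter.atTop (nhds (lams + w)) := by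
    have h1 : lam = fun l => lams
        + ∑ j, ((1 - α * hSherm.eigenvalues j) ^ l * cj j) • evv hSherm j := by
      funext l
      rw [← hform l]
      abel
    rw [h1]
    refine Filter.Tendsto.const_add _ (tendsto_finset_sum _ fun j _ => ?_)
    apply Filter.Tendsto.smul_const
    rcases eq_or_ne (hSherm.eigenvalues j) 0 with h | h
    · simpa [h] using tendsto_const_nhds
    · simp only [h, if_neg h]
      have hp := tendsto_pow_atTop_nhds_zero_of_abs_lt_one (hcontract j h)
      simpa using hp.mul_const (cj j)
  -- averaging operator
  set Avg : (Fin N × Fin n → ℝ) → (Fin N × Fin n → ℝ) :=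
    fun x p => (N : ℝ)⁻¹ * ∑ i, x (i, p.2) with hAvg
  have hAvgLb : ∀ z : Fin N × Fin n → ℝ, Avg (Lb *ᵥ z) = 0 := by
    intro z
    funext p
    simp only [hAvg, hLbmul, Pi.zero_apply]
    rw [Finset.sum_comm]
    have : ∀ j, ∑ i, L i j * z (j, p.2) = 0 := by
      intro j
      rw [← Finset.sum_mul, hLcol, zero_mul]
    simp [this]
  -- kernel of Lb: constant blocks
  have hkerconst : ∀ x : Fin N × Fin n → ℝ, Lb *ᵥ x = 0 →
      ∀ i i' k, x (i, k) = x (i', k) := by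
    intro x hx i i' k
    have hq : (fun i => x (i, k)) ⬝ᵥ (L *ᵥ fun i => x (i, k)) = 0 := by
      have h0 : x ⬝ᵥ (Lb *ᵥ x) = 0 := by rw [hx]; simp
      rw [hquadLb] at h0
      have h5 := Finset.sum_eq_zero_iff_of_nonneg (s := Finset.univ)
        (fun k (_ : k ∈ Finset.univ) => hLpsd (fun i => x (i, k)))
      exact (h5.mp h0) k (Finset.mem_univ k)
    rw [laplacian_quad a L hsym hdiag hL] at hq
    have hsq : ∑ i, ∑ j, a i j * (x (i, k) - x (j, k)) ^ 2 = 0 := by linarith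
    have hterm : ∀ i j, a i j * (x (i, k) - x (j, k)) ^ 2 = 0 := by
      intro i j
      have h1 := Finset.sum_eq_zero_iff_of_nonneg
        (fun i (_ : i ∈ Finset.univ) => Finset.sum_nonneg
          (fun j _ => mul_nonneg (hnn i j) (sq_nonneg (x (i, k) - x (j, k))))) |>.mp hsq
      have h2 := Finset.sum_eq_zero_iff_of_nonneg
        (fun j (_ : j ∈ Finset.univ) => mul_nonneg (hnn i j) (sq_nonneg _)) |>.mp
        (h1 i (Finset.mem_univ i))
      exact h2 j (Finset.mem_univ j)
    have hadj : ∀ i j, 0 < a i j → x (i, k) = x (j, k) := by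
      intro i j hij
      have := hterm i j
      have h2 : (x (i, k) - x (j, k)) ^ 2 = 0 := by
        rcases mul_eq_zero.mp this with h | h
        · exact absurd h hij.ne'
        · exact h
      have := pow_eq_zero_iff (n := 2) (by norm_num) |>.mp h2
      linarith
    induction hconn i i' with
    | refl => rfl
    | tail _ hab ih => exact ih.trans (hadj _ _ hab)
  have hAvgfix : ∀ x : Fin N × Fin n → ℝ, (∀ i i' k, x (i, k) = x (i', k)) → Avg x = x := by
    intro x hx
    funext p
    simp only [hAvg]
    have : ∀ i, x (i, p.2) = x p := by
      intro i
      rw [hx i p.1 p.2]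
    rw [Finset.sum_congr rfl fun i _ => this i, Finset.sum_const, Finset.card_univ,
      Fintype.card_fin, nsmul_eq_mul]
    rw [← mul_assoc, inv_mul_cancel₀ (by exact_mod_cast hN.ne' : (N : ℝ) ≠ 0), one_mul]
  have hAvgsmul : ∀ (r : ℝ) (x : Fin N × Fin n → ℝ), Avg (r • x) = r • Avg x := by
    intro r x
    funext p
    simp only [hAvg, Pi.smul_apply, smul_eq_mul, ← Finset.mul_sum]
    ring
  -- zero eigenvalue: eigenvector is in the kernel of Lb
  have hkerevv : ∀ j, hSherm.eigenvalues j = 0 → Lb *ᵥ evv hSherm j = 0 := by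
    intro j hj
    have h1 : S *ᵥ evv hSherm j = 0 := by
      rw [mulVec_evv, hj, zero_smul]
    have h2 : (Lb *ᵥ evv hSherm j) ⬝ᵥ (Mb⁻¹ *ᵥ (Lb *ᵥ evv hSherm j)) = 0 := by
      rw [← hquadS, h1]; simp
    have h3 : Mb⁻¹ *ᵥ (Lb *ᵥ evv hSherm j) = 0 := by
      have := (hMbinvPD.posSemidef.dotProduct_mulVec_zero_iff
        (Lb *ᵥ evv hSherm j))
      rw [star_trivial] at this
      exact this.mp h2
    have h4 : Mb *ᵥ (Mb⁻¹ *ᵥ (Lb *ᵥ evv hSherm j)) = Mb *ᵥ 0 := congrArg _ h3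
    rw [hMMinv, Matrix.mulVec_zero] at h4
    exact h4
  -- nonzero eigenvalue: eigenvector averages to zero
  have hAvg0 : ∀ j, hSherm.eigenvalues j ≠ 0 → Avg (evv hSherm j) = 0 := by
    intro j hj
    have h1 : evv hSherm j = (hSherm.eigenvalues j)⁻¹ • (S *ᵥ evv hSherm j) := by
      rw [mulVec_evv, smul_smul, inv_mul_cancel₀ hj, one_smul]
    have hS2 : Lb * (Mb⁻¹ * Lb) = S := by rw [hSdef, Matrix.mul_assoc]
    have h2 : S *ᵥ evv hSherm j = Lb *ᵥ ((Mb⁻¹ * Lb) *ᵥ evv hSherm j) := by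
      rw [Matrix.mulVec_mulVec, hS2]
    rw [h1, h2, hAvgsmul, hAvgLb, smul_zero]
  -- identify w with Avg e0
  have hAvglin : Avg e0 = ∑ j, cj j • Avg (evv hSherm j) := by
    have hexp := evv_expand hSherm e0
    funext p
    simp only [hAvg, Finset.sum_apply, Pi.smul_apply, smul_eq_mul]
    calc (N:ℝ)⁻¹ * ∑ i, e0 (i, p.2)
        = (N:ℝ)⁻¹ * ∑ i, ∑ j, cj j * evv hSherm j (i, p.2) := by
          congr 1
          refine Finset.sum_congr rfl fun i _ => ?_
          conv_lhs => rw [hexp]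
          simp [Finset.sum_apply, Pi.smul_apply, hcj]
      _ = ∑ j, cj j * ((N:ℝ)⁻¹ * ∑ i, evv hSherm j (i, p.2)) := by
          simp only [Finset.mul_sum]
          rw [Finset.sum_comm]
          exact Finset.sum_congr rfl fun j _ => Finset.sum_congr rfl fun i _ => by ring
  have hwAvg : w = Avg e0 := by
    rw [hAvglin, hw]
    refine Finset.sum_congr rfl fun j _ => ?_
    rcases eq_or_ne (hSherm.eigenvalues j) 0 with h | h
    · rw [if_pos h, hAvgfix (evv hSherm j) (hkerconst _ (hkerevv j h))]
    · rw [if_neg h, hAvg0 j h, smul_zero, zero_smul]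
  refine ⟨?_, ?_, ?_⟩
  · -- convergence of lam
    have htarget : lams + w
        = lams + fun p => (N : ℝ)⁻¹ * ∑ j, (lam 0 (j, p.2) - lams (j, p.2)) := by
      rw [hwAvg]
      funext p
      simp only [Pi.add_apply, hAvg, he0, Pi.sub_apply]
    exact htarget ▸ hlamtend
  · -- convergence of ξ
    have hwconst : ∀ i i' k, w (i, k) = w (i', k) := by
      intro i i' k
      rw [hwAvg]
    have hwker : Lb *ᵥ w = 0 := by
      funext p
      obtain ⟨i, k⟩ := p
      rw [hLbmul]
      have : ∑ j, L i j * w (j, k) = ∑ j, L i j * w (i, k) :=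
        Finset.sum_congr rfl fun j _ => by rw [hwconst j i k]
      rw [this, ← Finset.sum_mul, hLrow, zero_mul]
      rfl
    have hlim : Mb⁻¹ *ᵥ (c - Lb *ᵥ (lams + w)) = ξs := by
      rw [Matrix.mulVec_add, hwker, add_zero, ← hKKT1]
      have h5 : Mb *ᵥ ξs + Lb *ᵥ lams - Lb *ᵥ lams = Mb *ᵥ ξs := by abel
      rw [h5, hMinvM]
    have h1 : Filter.Tendsto (fun l => ξ (l + 1)) Filter.atTop (nhds ξs) := by
      have h2 := mulVec_tendsto Lb hlamtend
      have h3 := Filter.Tendsto.const_sub c h2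
      have h4 := mulVec_tendsto Mb⁻¹ h3
      rw [hlim] at h4
      have h6 : (fun l => ξ (l + 1)) = fun l => Mb⁻¹ *ᵥ (c - Lb *ᵥ lam l) := by
        funext l
        exact hiter1 l
      rw [h6]
      exact h4
    exact (Filter.tendsto_add_atTop_iff_nat 1).mp h1
  · -- strict optimality
    intro ζ hζ hne
    set d : Fin N × Fin n → ℝ := ζ - ξs with hd
    have hdne : d ≠ 0 := sub_ne_zero.mpr hne
    have hdker : Lb *ᵥ d = 0 := by rw [hd, Matrix.mulVec_sub, hζ, hKKT2, sub_zero]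
    have hpos : 0 < d ⬝ᵥ (Mb *ᵥ d) := by
      have := hMbPD.dotProduct_mulVec_pos hdne
      rwa [star_trivial] at this
    have horth : d ⬝ᵥ (Lb *ᵥ lams) = 0 := by
      rw [Matrix.dotProduct_mulVec, ← Matrix.mulVec_transpose, hLbT, hdker,
        zero_dotProduct]
    have hMbT : Mbᵀ = Mb := by
      ext p q
      have := congrFun (congrFun hMbherm p) q
      simpa [Matrix.conjTranspose_apply] using this
    have hsymdot : ∀ u v : Fin N × Fin n → ℝ, u ⬝ᵥ (Mb *ᵥ v) = v ⬝ᵥ (Mb *ᵥ u) := by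
      intro u v
      rw [Matrix.dotProduct_mulVec, ← Matrix.mulVec_transpose, hMbT, dotProduct_comm]
    have hζd : ζ = ξs + d := by rw [hd]; abel
    have hcd : c ⬝ᵥ d = d ⬝ᵥ (Mb *ᵥ ξs) := by
      rw [← hKKT1, add_dotProduct, dotProduct_comm (Lb *ᵥ lams) d, horth,
        add_zero, dotProduct_comm]
    have hexp : ζ ⬝ᵥ (Mb *ᵥ ζ)
        = ξs ⬝ᵥ (Mb *ᵥ ξs) + 2 * (d ⬝ᵥ (Mb *ᵥ ξs)) + d ⬝ᵥ (Mb *ᵥ d) := by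
      rw [hζd, Matrix.mulVec_add, add_dotProduct, dotProduct_add,
        dotProduct_add, hsymdot ξs d]
      ring
    have hcζ : c ⬝ᵥ ζ = c ⬝ᵥ ξs + d ⬝ᵥ (Mb *ᵥ ξs) := by
      rw [hζd, dotProduct_add, hcd]
    rw [hexp, hcζ]
    linarith
end

section
/- Under the hypotheses of the previous dual ascent iteration with λ_{i,0} = 0 for all i, the limit of λ_l equals (Ū Λ̄⁻¹ Ūᵀ ⊗ Iₙ)b, i.e., the unique dual solution orthogonal to the kernel of L̄, where L = U diag(0, Λ̄) Uᵀ with U = [U₁ Ū] orthonormal and b = c − Mξ* projected appropriately. -/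
open Matrix Kronecker

/-- Symmetric dot product identity for a symmetric real matrix. -/
private lemma dot_mulVec_symm' {ι : Type*} [Fintype ι] (B : Matrix ι ι ℝ) (hB : Bᵀ = B)
    (x y : ι → ℝ) : x ⬝ᵥ (B *ᵥ y) = (B *ᵥ x) ⬝ᵥ y := by
  rw [Matrix.dotProduct_mulVec, ← Matrix.mulVec_transpose, hB]

/-- Cauchy–Schwarz style bound: for a symmetric PSD matrix `B` with quadratic form
bounded by `s`, `‖Bx‖² ≤ s * xᵀBx`. -/
private lemma psd_sq_bound {ι : Type*} [Fintype ι] (B : Matrix ι ι ℝ) (hB : Bᵀ = B)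
    (hpsd : ∀ y, 0 ≤ y ⬝ᵥ (B *ᵥ y)) (s : ℝ) (hs : 0 ≤ s)
    (hub : ∀ y, y ⬝ᵥ (B *ᵥ y) ≤ s * (y ⬝ᵥ y)) (x : ι → ℝ) :
    (B *ᵥ x) ⬝ᵥ (B *ᵥ x) ≤ s * (x ⬝ᵥ (B *ᵥ x)) := by
  set q : ℝ := x ⬝ᵥ (B *ᵥ x) with hq
  set r : ℝ := (B *ᵥ x) ⬝ᵥ (B *ᵥ x) with hr
  set t : ℝ := (B *ᵥ x) ⬝ᵥ (B *ᵥ (B *ᵥ x)) with ht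
  have hqnn : 0 ≤ q := hpsd x
  have hrnn : 0 ≤ r := by
    rw [hr, dotProduct]
    exact Finset.sum_nonneg fun i _ => mul_self_nonneg _
  have hquad : ∀ u : ℝ, 0 ≤ t * (u * u) + (2 * r) * u + q := by
    intro u
    have h0 := hpsd (x + u • (B *ᵥ x))
    have hcross : x ⬝ᵥ (B *ᵥ (B *ᵥ x)) = r := by
      rw [dot_mulVec_symm' B hB]
    calc (0:ℝ) ≤ (x + u • (B *ᵥ x)) ⬝ᵥ (B *ᵥ (x + u • (B *ᵥ x))) := h0
    _ = t * (u * u) + (2 * r) * u + q := by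
        rw [Matrix.mulVec_add, Matrix.mulVec_smul]
        rw [add_dotProduct, dotProduct_add, dotProduct_add]
        rw [smul_dotProduct, smul_dotProduct, dotProduct_smul,
          dotProduct_smul]
        rw [hcross]
        simp only [smul_eq_mul, ← hq, ← hr, ← ht]
        ring
  have hdisc : discrim t (2 * r) q ≤ 0 := discrim_le_zero hquad
  rw [discrim] at hdisc
  have h1 : r ^ 2 ≤ t * q := by nlinarith [hdisc]
  have h2 : t ≤ s * r := hub (B *ᵥ x)
  have h3 : t * q ≤ s * r * q := mul_le_mul_of_nonneg_right h2 hqnn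
  rcases hrnn.eq_or_lt with h | h
  · rw [← h]
    exact mul_nonneg hs hqnn
  · have h4 : r * r ≤ (s * q) * r := by nlinarith [h1, h3]
    exact le_of_mul_le_mul_right h4 h

/-- With zero initialization `λ₀ = 0`, the dual ascent iterates `λ_l` converge to the
unique dual solution orthogonal to the kernel of `L̄ = L ⊗ Iₙ` (equivalently,
`(ŪΛ̄⁻¹Ūᵀ ⊗ Iₙ)b` where `b = c − Mξ*`). -/
theorem dual_ascent_zero_init_limit {N n : ℕ} (hN : 0 < N)
    (a L : Matrix (Fin N) (Fin N) ℝ)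
    (hsym : ∀ i j, a i j = a j i)
    (hnn : ∀ i j, 0 ≤ a i j)
    (hdiag : ∀ i, a i i = 0)
    (hconn : ∀ i j : Fin N, Relation.ReflTransGen (fun p q => 0 < a p q) i j)
    (hL : ∀ i j, L i j = if i = j then ∑ k, a i k else -(a i j))
    (σN : ℝ) (hσN : ∀ x : Fin N → ℝ, x ⬝ᵥ (L *ᵥ x) ≤ σN * (x ⬝ᵥ x)) (hσpos : 0 < σN)
    (M : Fin N → Matrix (Fin n) (Fin n) ℝ) (hM : ∀ i, (M i).PosDef)
    (Mb : Matrix (Fin N × Fin n) (Fin N × Fin n) ℝ)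
    (hMb : ∀ p q, Mb p q = if p.1 = q.1 then M p.1 p.2 q.2 else 0)
    (mB : ℝ) (hmB : ∀ x : Fin N × Fin n → ℝ, x ⬝ᵥ (Mb⁻¹ *ᵥ x) ≤ mB * (x ⬝ᵥ x))
    (hmBpos : 0 < mB)
    (Lb : Matrix (Fin N × Fin n) (Fin N × Fin n) ℝ)
    (hLb : Lb = L ⊗ₖ (1 : Matrix (Fin n) (Fin n) ℝ))
    (c : Fin N × Fin n → ℝ)
    (α : ℝ) (hα : 0 < α) (hαstep : α < 2 / (σN ^ 2 * mB))
    (ξ lam : ℕ → Fin N × Fin n → ℝ)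
    (hiter1 : ∀ l, ξ (l + 1) = Mb⁻¹ *ᵥ (c - Lb *ᵥ lam l))
    (hiter2 : ∀ l, lam (l + 1) = lam l + α • (Lb *ᵥ ξ (l + 1)))
    (hlam0 : lam 0 = 0)
    (ξs lams : Fin N × Fin n → ℝ)
    (hKKT1 : Mb *ᵥ ξs + Lb *ᵥ lams = c)
    (hKKT2 : Lb *ᵥ ξs = 0) :
    ∃ linf : Fin N × Fin n → ℝ,
      Filter.Tendsto lam Filter.atTop (nhds linf) ∧
      Lb *ᵥ linf = c - Mb *ᵥ ξs ∧
      (∀ v : Fin N × Fin n → ℝ, Lb *ᵥ v = 0 → linf ⬝ᵥ v = 0) ∧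
      (∀ l' : Fin N × Fin n → ℝ,
        Lb *ᵥ l' = c - Mb *ᵥ ξs → (∀ v, Lb *ᵥ v = 0 → l' ⬝ᵥ v = 0) → l' = linf) := by
  classical
  -- Symmetry of L and Lb
  have hLsymm : Lᵀ = L := by
    ext i j
    simp only [Matrix.transpose_apply, hL]
    by_cases h : i = j
    · subst h; simp
    · rw [if_neg h, if_neg (Ne.symm h), hsym]
  have hLbT : Lbᵀ = Lb := by
    rw [hLb, ← Matrix.kroneckerMap_transpose, hLsymm, Matrix.transpose_one]
  -- entries and mulVec of Lb
  have hLbe : ∀ p q : Fin N × Fin n, Lb p q = if p.2 = q.2 then L p.1 q.1 else 0 := by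
    intro p q
    rw [hLb]
    rcases p with ⟨i, j⟩; rcases q with ⟨i', j'⟩
    simp [Matrix.kroneckerMap_apply, Matrix.one_apply, mul_ite]
  have hLbmv : ∀ (x : Fin N × Fin n → ℝ) (p : Fin N × Fin n),
      (Lb *ᵥ x) p = (L *ᵥ (fun i => x (i, p.2))) p.1 := by
    intro x p
    simp only [Matrix.mulVec, dotProduct]
    rw [Fintype.sum_prod_type]
    rw [Finset.sum_comm]
    rw [Finset.sum_eq_single p.2]
    · simp [hLbe]
    · intro b _ hb
      apply Finset.sum_eq_zero
      intro i _
      rw [hLbe]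
      simp [Ne.symm hb]
    · simp
  -- row formula for the Laplacian
  have hLrow : ∀ (y : Fin N → ℝ) (i : Fin N),
      (L *ᵥ y) i = ∑ j, a i j * (y i - y j) := by
    intro y i
    have h1 : ∀ j : Fin N, L i j * y j
        = (if i = j then ((∑ k, a i k) + a i j) else 0) * y i - a i j * y j := by
      intro j
      by_cases h : i = j
      · subst h; rw [hL]; simp [hdiag i]
      · rw [hL, if_neg h, if_neg h]; ring
    show ∑ j, L i j * y j = _
    rw [Finset.sum_congr rfl fun j _ => h1 j, Finset.sum_sub_distrib]
    have h2 : ∑ j, (if i = j then ((∑ k, a i k) + a i j) else 0) * y i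
        = ((∑ k, a i k) + a i i) * y i := by
      simp [ite_mul, Finset.sum_ite_eq]
    rw [h2, hdiag i]
    have h3 : ∑ j, a i j * (y i - y j) = (∑ j, a i j) * y i - ∑ j, a i j * y j := by
      rw [Finset.sum_mul, ← Finset.sum_sub_distrib]
      exact Finset.sum_congr rfl fun j _ => by ring
    rw [h3]; ring_nf
  -- the Laplacian is positive semidefinite
  have hLquad : ∀ y : Fin N → ℝ,
      y ⬝ᵥ (L *ᵥ y) = ∑ i, ∑ j, a i j * (y i * (y i - y j)) := by
    intro y
    show ∑ i, y i * (L *ᵥ y) i = _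
    refine Finset.sum_congr rfl fun i _ => ?_
    rw [hLrow, Finset.mul_sum]
    exact Finset.sum_congr rfl fun j _ => by ring
  have hLpsd : ∀ y : Fin N → ℝ, 0 ≤ y ⬝ᵥ (L *ᵥ y) := by
    intro y
    have hswap : ∑ i, ∑ j, a i j * (y i * (y i - y j))
        = ∑ i, ∑ j, a i j * (y j * (y j - y i)) := by
      rw [Finset.sum_comm]
      refine Finset.sum_congr rfl fun i _ => Finset.sum_congr rfl fun j _ => ?_
      rw [hsym j i]
    have h2 : 2 * (y ⬝ᵥ (L *ᵥ y)) = ∑ i, ∑ j, a i j * ((y i - y j) ^ 2) := by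
      rw [two_mul]
      nth_rewrite 2 [hLquad]
      rw [hswap, hLquad, ← Finset.sum_add_distrib]
      refine Finset.sum_congr rfl fun i _ => ?_
      rw [← Finset.sum_add_distrib]
      exact Finset.sum_congr rfl fun j _ => by ring
    have h3 : 0 ≤ ∑ i, ∑ j, a i j * ((y i - y j) ^ 2) :=
      Finset.sum_nonneg fun i _ => Finset.sum_nonneg fun j _ =>
        mul_nonneg (hnn i j) (sq_nonneg _)
    have h4 := h3
    rw [← h2] at h4
    linarith
  -- quadratic facts for Lb
  have hLbquad : ∀ x : Fin N × Fin n → ℝ,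
      x ⬝ᵥ (Lb *ᵥ x) = ∑ j : Fin n, (fun i => x (i, j)) ⬝ᵥ (L *ᵥ (fun i => x (i, j))) := by
    intro x
    show ∑ p, x p * (Lb *ᵥ x) p = _
    rw [Fintype.sum_prod_type, Finset.sum_comm]
    refine Finset.sum_congr rfl fun j _ => Finset.sum_congr rfl fun i _ => ?_
    rw [hLbmv]
  have hxxsplit : ∀ x : Fin N × Fin n → ℝ,
      x ⬝ᵥ x = ∑ j : Fin n, (fun i => x (i, j)) ⬝ᵥ (fun i => x (i, j)) := by
    intro x
    show ∑ p, x p * x p = _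
    rw [Fintype.sum_prod_type, Finset.sum_comm]
    rfl
  have hLbpsd : ∀ x, 0 ≤ x ⬝ᵥ (Lb *ᵥ x) := by
    intro x
    rw [hLbquad]
    exact Finset.sum_nonneg fun j _ => hLpsd _
  have hLble : ∀ x, x ⬝ᵥ (Lb *ᵥ x) ≤ σN * (x ⬝ᵥ x) := by
    intro x
    rw [hLbquad, hxxsplit, Finset.mul_sum]
    exact Finset.sum_le_sum fun j _ => hσN _
  have hLbsq := psd_sq_bound Lb hLbT hLbpsd σN hσpos.le hLble
  have hdotnn : ∀ {ι : Type} [Fintype ι] (x : ι → ℝ), 0 ≤ x ⬝ᵥ x := by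
    intro ι _ x
    exact Finset.sum_nonneg fun i _ => mul_self_nonneg _
  -- Mb is positive definite
  have hMsym : ∀ (i : Fin N) (x y : Fin n), M i x y = M i y x := by
    intro i x y
    have h := congrFun (congrFun (hM i).1 x) y
    simpa [Matrix.conjTranspose_apply] using h.symm
  have hMbherm : Mb.IsHermitian := by
    show Mbᴴ = Mb
    ext p q
    rw [Matrix.conjTranspose_apply, star_trivial, hMb, hMb]
    by_cases h : p.1 = q.1
    · rw [if_pos h.symm, if_pos h, ← h, hMsym]
    · rw [if_neg (fun hh => h hh.symm), if_neg h]
  have hMbmv : ∀ (x : Fin N × Fin n → ℝ) (p : Fin N × Fin n),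
      (Mb *ᵥ x) p = (M p.1 *ᵥ (fun j => x (p.1, j))) p.2 := by
    intro x p
    simp only [Matrix.mulVec, dotProduct]
    rw [Fintype.sum_prod_type]
    rw [Finset.sum_eq_single p.1]
    · refine Finset.sum_congr rfl fun j _ => ?_
      rw [hMb]; simp
    · intro b _ hb
      apply Finset.sum_eq_zero
      intro j _
      rw [hMb]
      simp [Ne.symm hb]
    · simp
  have hMbquad : ∀ x : Fin N × Fin n → ℝ,
      x ⬝ᵥ (Mb *ᵥ x) = ∑ i : Fin N, (fun j => x (i, j)) ⬝ᵥ (M i *ᵥ (fun j => x (i, j))) := by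
    intro x
    show ∑ p, x p * (Mb *ᵥ x) p = _
    rw [Fintype.sum_prod_type]
    refine Finset.sum_congr rfl fun i _ => Finset.sum_congr rfl fun j _ => ?_
    rw [hMbmv]
  have hMbpd : Mb.PosDef := by
    refine Matrix.PosDef.of_dotProduct_mulVec_pos hMbherm fun x hx => ?_
    have hsx : star x = x := by
      funext p; exact star_trivial _
    rw [hsx, hMbquad]
    obtain ⟨p, hp⟩ := Function.ne_iff.mp hx
    refine Finset.sum_pos' (fun i _ => ?_) ⟨p.1, Finset.mem_univ _, ?_⟩
    · have h := (hM i).posSemidef.dotProduct_mulVec_nonneg (fun j => x (i, j))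
      simpa using h
    · have hxi : (fun j => x (p.1, j)) ≠ 0 := by
        intro h0
        exact hp (by simpa using congrFun h0 p.2)
      have h := (hM p.1).dotProduct_mulVec_pos hxi
      simpa using h
  have hMbinv : Mb⁻¹.PosDef := hMbpd.inv
  have hMbdet : IsUnit Mb.det := (Matrix.isUnit_iff_isUnit_det Mb).mp hMbpd.isUnit
  have hMinvMul : ∀ v : Fin N × Fin n → ℝ, Mb⁻¹ *ᵥ (Mb *ᵥ v) = v := by
    intro v
    rw [Matrix.mulVec_mulVec, Matrix.nonsing_inv_mul _ hMbdet, Matrix.one_mulVec]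
  -- the iteration matrix A = Lb Mb⁻¹ Lb
  set A : Matrix (Fin N × Fin n) (Fin N × Fin n) ℝ := Lb * Mb⁻¹ * Lb with hAdef
  have hMbinvT : Mb⁻¹ᵀ = Mb⁻¹ := by
    have h : Mb⁻¹ᴴ = Mb⁻¹ := hMbinv.1
    rwa [Matrix.conjTranspose_eq_transpose_of_trivial] at h
  have hAT : Aᵀ = A := by
    rw [hAdef, Matrix.transpose_mul, Matrix.transpose_mul, hLbT, hMbinvT, Matrix.mul_assoc]
  have hAherm : A.IsHermitian := by
    show Aᴴ = A
    rw [Matrix.conjTranspose_eq_transpose_of_trivial, hAT]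
  have hAmv : ∀ x, A *ᵥ x = Lb *ᵥ (Mb⁻¹ *ᵥ (Lb *ᵥ x)) := by
    intro x
    rw [hAdef, ← Matrix.mulVec_mulVec, ← Matrix.mulVec_mulVec]
  have hAquad : ∀ x, x ⬝ᵥ (A *ᵥ x) = (Lb *ᵥ x) ⬝ᵥ (Mb⁻¹ *ᵥ (Lb *ᵥ x)) := by
    intro x
    rw [hAmv, dot_mulVec_symm' Lb hLbT]
  have hApsd : ∀ x, 0 ≤ x ⬝ᵥ (A *ᵥ x) := by
    intro x
    rw [hAquad]
    have h := hMbinv.posSemidef.dotProduct_mulVec_nonneg (Lb *ᵥ x)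
    simpa using h
  have hAub : ∀ x, x ⬝ᵥ (A *ᵥ x) ≤ σN ^ 2 * mB * (x ⬝ᵥ x) := by
    intro x
    have h1 := hmB (Lb *ᵥ x)
    have h2 := hLbsq x
    have h3 := hLble x
    have h4 := hLbpsd x
    have h5 := hdotnn x
    rw [hAquad]
    nlinarith [mul_le_mul_of_nonneg_left h2 hmBpos.le,
      mul_le_mul_of_nonneg_left h3 (mul_nonneg hσpos.le hmBpos.le)]
  -- spectral decomposition of A
  have hBdef := hAherm.eigenvectorBasis
  set B := hAherm.eigenvectorBasis with hB
  set μ := hAherm.eigenvalues with hμ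
  set Bf : (Fin N × Fin n) → (Fin N × Fin n → ℝ) := fun k => B k with hBf
  have hinnerdot : ∀ x y : EuclideanSpace ℝ (Fin N × Fin n),
      (inner ℝ x y : ℝ) = (x : Fin N × Fin n → ℝ) ⬝ᵥ (y : Fin N × Fin n → ℝ) := by
    intro x y
    rw [PiLp.inner_apply]
    simp only [RCLike.inner_apply, conj_trivial]
    exact Finset.sum_congr rfl fun i _ => mul_comm _ _
  have hBorth : ∀ j k, Bf j ⬝ᵥ Bf k = if j = k then 1 else 0 := by
    intro j k
    rw [← hinnerdot (B j) (B k)]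
    exact orthonormal_iff_ite.mp B.orthonormal j k
  have hBeig : ∀ k, A *ᵥ Bf k = μ k • Bf k := fun k => hAherm.mulVec_eigenvectorBasis k
  have hμval : ∀ k, Bf k ⬝ᵥ (A *ᵥ Bf k) = μ k := by
    intro k
    rw [hBeig k, dotProduct_smul, smul_eq_mul, hBorth k k, if_pos rfl, mul_one]
  have hμnn : ∀ k, 0 ≤ μ k := by
    intro k
    rw [← hμval k]
    exact hApsd _
  have hμub : ∀ k, μ k ≤ σN ^ 2 * mB := by
    intro k
    have h := hAub (Bf k)
    rw [hμval k] at h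
    calc μ k ≤ σN ^ 2 * mB * (Bf k ⬝ᵥ Bf k) := h
    _ = σN ^ 2 * mB := by rw [hBorth k k, if_pos rfl, mul_one]
  have hαμ : ∀ k, α * μ k < 2 := by
    intro k
    have hσm : 0 < σN ^ 2 * mB := by positivity
    have h1 : α * μ k ≤ α * (σN ^ 2 * mB) := mul_le_mul_of_nonneg_left (hμub k) hα.le
    have h2 : α * (σN ^ 2 * mB) < 2 := by
      have := (lt_div_iff₀ hσm).mp hαstep
      linarith
    linarith
  -- the error sequence
  set e : ℕ → Fin N × Fin n → ℝ := fun l => lam l - lams with hedef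
  have hLblams : Lb *ᵥ lams = c - Mb *ᵥ ξs := by
    rw [eq_sub_iff_add_eq, add_comm]
    exact hKKT1
  have herec : ∀ l, e (l + 1) = e l - α • (A *ᵥ e l) := by
    intro l
    have h1 : c - Lb *ᵥ lam l = Mb *ᵥ ξs - Lb *ᵥ e l := by
      rw [show e l = lam l - lams from rfl, Matrix.mulVec_sub, ← hKKT1]
      abel
    have h2 : ξ (l + 1) = ξs - Mb⁻¹ *ᵥ (Lb *ᵥ e l) := by
      rw [hiter1, h1, Matrix.mulVec_sub, hMinvMul]
    have h3 : Lb *ᵥ ξ (l + 1) = -(A *ᵥ e l) := by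
      rw [h2, Matrix.mulVec_sub, hKKT2, hAmv, zero_sub]
    calc e (l + 1) = lam (l + 1) - lams := rfl
    _ = lam l + α • (Lb *ᵥ ξ (l + 1)) - lams := by rw [hiter2]
    _ = e l - α • (A *ᵥ e l) := by
        rw [h3, smul_neg, show e l = lam l - lams from rfl]
        abel
  have hAdot : ∀ x y, x ⬝ᵥ (A *ᵥ y) = (A *ᵥ x) ⬝ᵥ y := dot_mulVec_symm' A hAT
  -- coordinate evolution
  set c0 : (Fin N × Fin n) → ℝ := fun k => Bf k ⬝ᵥ e 0 with hc0
  have hcoord : ∀ k l, Bf k ⬝ᵥ e l = (1 - α * μ k) ^ l * c0 k := by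
    intro k l
    induction l with
    | zero => simp [hc0]
    | succ l ih =>
      rw [herec l, dotProduct_sub, dotProduct_smul, hAdot (Bf k) (e l),
        hBeig k, smul_dotProduct, smul_eq_mul, smul_eq_mul, ih, pow_succ]
      ring
  -- basis expansion
  have hrepr : ∀ (v : Fin N × Fin n → ℝ) (p : Fin N × Fin n),
      v p = ∑ k, (Bf k ⬝ᵥ v) * Bf k p := by
    intro v p
    have h := B.sum_repr' (WithLp.toLp 2 v)
    have h2 : (∑ i, (inner ℝ (B i) (WithLp.toLp 2 v) : ℝ) • B i) p = v p :=
      congrArg (fun z : EuclideanSpace ℝ (Fin N × Fin n) => z p) h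
    rw [← h2]
    have h3 : (∑ i, (inner ℝ (B i) (WithLp.toLp 2 v) : ℝ) • B i) p
        = ∑ i, ((inner ℝ (B i) (WithLp.toLp 2 v) : ℝ) • B i) p :=
      by rw [WithLp.ofLp_sum]; exact Finset.sum_apply p Finset.univ _
    rw [h3]
    refine Finset.sum_congr rfl fun i _ => ?_
    rw [hinnerdot]
    rfl
  -- the limit
  set w : Fin N × Fin n → ℝ := fun p => ∑ k, (if μ k = 0 then c0 k else 0) * Bf k p with hw
  set linf : Fin N × Fin n → ℝ := lams + w with hlinf
  -- common facts for the last three goals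
  have hkerL : ∀ k, μ k = 0 → Lb *ᵥ Bf k = 0 := by
    intro k hk
    by_contra hne
    have h0 : A *ᵥ Bf k = 0 := by rw [hBeig k, hk, zero_smul]
    have h1 : Bf k ⬝ᵥ (A *ᵥ Bf k) = 0 := by rw [h0, dotProduct_zero]
    rw [hAquad] at h1
    have h2 : 0 < (Lb *ᵥ Bf k) ⬝ᵥ (Mb⁻¹ *ᵥ (Lb *ᵥ Bf k)) := by
      simpa using hMbinv.dotProduct_mulVec_pos hne
    linarith
  have horthcoeff : ∀ (v : Fin N × Fin n → ℝ) k, Lb *ᵥ v = 0 → μ k ≠ 0 → Bf k ⬝ᵥ v = 0 := by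
    intro v k hv hk
    have h1 : Bf k ⬝ᵥ (A *ᵥ v) = 0 := by
      rw [hAmv, hv, Matrix.mulVec_zero, Matrix.mulVec_zero, dotProduct_zero]
    rw [hAdot (Bf k) v, hBeig k, smul_dotProduct, smul_eq_mul] at h1
    rcases mul_eq_zero.mp h1 with h | h
    · exact absurd h hk
    · exact h
  have hwBk : ∀ k, w ⬝ᵥ Bf k = if μ k = 0 then c0 k else 0 := by
    intro k
    show ∑ p, w p * Bf k p = _
    have h1 : ∀ p, w p * Bf k p = ∑ j, (if μ j = 0 then c0 j else 0) * Bf j p * Bf k p := by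
      intro p
      rw [hw, Finset.sum_mul]
    rw [Finset.sum_congr rfl fun p _ => h1 p, Finset.sum_comm]
    have h2 : ∀ j, ∑ p, (if μ j = 0 then c0 j else 0) * Bf j p * Bf k p
        = (if μ j = 0 then c0 j else 0) * (Bf j ⬝ᵥ Bf k) := by
      intro j
      rw [dotProduct, Finset.mul_sum]
      exact Finset.sum_congr rfl fun p _ => by ring
    rw [Finset.sum_congr rfl fun j _ => h2 j]
    rw [Finset.sum_eq_single k]
    · rw [hBorth k k, if_pos rfl, mul_one]
    · intro j _ hj
      rw [hBorth j k, if_neg hj, mul_zero]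
    · simp
  have hlinfBk : ∀ k, μ k = 0 → linf ⬝ᵥ Bf k = 0 := by
    intro k hk
    rw [hlinf, add_dotProduct, hwBk k, if_pos hk]
    have h1 : c0 k = -(Bf k ⬝ᵥ lams) := by
      rw [show c0 k = Bf k ⬝ᵥ e 0 from rfl, show e 0 = lam 0 - lams from rfl,
        hlam0, zero_sub, dotProduct_neg]
    rw [h1, dotProduct_comm]
    ring
  have hLbw : Lb *ᵥ w = 0 := by
    have hw' : w = ∑ k, (if μ k = 0 then c0 k else 0) • Bf k := by
      funext p
      rw [hw]
      rw [Finset.sum_apply p Finset.univ _]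
      rfl
    have hsum : Lb *ᵥ (∑ k, (if μ k = 0 then c0 k else 0) • Bf k)
        = ∑ k, Lb *ᵥ ((if μ k = 0 then c0 k else 0) • Bf k) :=
      map_sum Lb.mulVecLin _ Finset.univ
    rw [hw', hsum]
    refine Finset.sum_eq_zero fun k _ => ?_
    rw [Matrix.mulVec_smul]
    by_cases hk : μ k = 0
    · rw [hkerL k hk, smul_zero]
    · rw [if_neg hk, zero_smul]
  have hLblinf : Lb *ᵥ linf = c - Mb *ᵥ ξs := by
    rw [hlinf, Matrix.mulVec_add, hLbw, add_zero, hLblams]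
  have horth : ∀ v : Fin N × Fin n → ℝ, Lb *ᵥ v = 0 → linf ⬝ᵥ v = 0 := by
    intro v hv
    have hexp : linf ⬝ᵥ v = ∑ k, (Bf k ⬝ᵥ v) * (linf ⬝ᵥ Bf k) := by
      calc linf ⬝ᵥ v = ∑ p, linf p * (∑ k, (Bf k ⬝ᵥ v) * Bf k p) := by
            refine Finset.sum_congr rfl fun p _ => ?_
            rw [← hrepr v p]
      _ = ∑ p, ∑ k, (Bf k ⬝ᵥ v) * (linf p * Bf k p) := by
            refine Finset.sum_congr rfl fun p _ => ?_
            rw [Finset.mul_sum]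
            exact Finset.sum_congr rfl fun k _ => by ring
      _ = ∑ k, (Bf k ⬝ᵥ v) * (linf ⬝ᵥ Bf k) := by
            rw [Finset.sum_comm]
            refine Finset.sum_congr rfl fun k _ => ?_
            rw [show (linf ⬝ᵥ Bf k) = ∑ p, linf p * Bf k p from rfl, Finset.mul_sum]
    rw [hexp]
    refine Finset.sum_eq_zero fun k _ => ?_
    by_cases hk : μ k = 0
    · rw [hlinfBk k hk, mul_zero]
    · rw [horthcoeff v k hv hk, zero_mul]
  refine ⟨linf, ?_, hLblinf, horth, ?_⟩
  · -- convergence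
    rw [tendsto_pi_nhds]
    intro p
    have hform : ∀ l, lam l p = lams p + ∑ k, ((1 - α * μ k) ^ l * c0 k) * Bf k p := by
      intro l
      have h1 : lam l p = lams p + e l p := by
        rw [show e l = lam l - lams from rfl]
        simp
      rw [h1, hrepr (e l) p]
      congr 1
      exact Finset.sum_congr rfl fun k _ => by rw [hcoord k l]
    have hval : linf p = lams p + ∑ k, (if μ k = 0 then c0 k else 0) * Bf k p := rfl
    rw [hval]
    have htend : Filter.Tendsto
        (fun l => lams p + ∑ k, ((1 - α * μ k) ^ l * c0 k) * Bf k p) Filter.atTop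
        (nhds (lams p + ∑ k, (if μ k = 0 then c0 k else 0) * Bf k p)) := by
      apply Filter.Tendsto.const_add
      apply tendsto_finset_sum
      intro k _
      by_cases hk : μ k = 0
      · simp only [hk, mul_zero, sub_zero, one_pow, one_mul, eq_self_iff_true, if_true]
        exact tendsto_const_nhds
      · rw [if_neg hk]
        have habs : |1 - α * μ k| < 1 := by
          rw [abs_lt]
          constructor
          · have := hαμ k
            linarith
          · have h0 : 0 < α * μ k := mul_pos hα (lt_of_le_of_ne (hμnn k) (Ne.symm hk))
            linarith
        have h1 := tendsto_pow_atTop_nhds_zero_of_abs_lt_one habs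
        have h2 := (h1.mul_const (c0 k)).mul_const (Bf k p)
        simpa using h2
    exact Filter.Tendsto.congr (fun l => (hform l).symm) htend
  · -- uniqueness
    intro l' h1 h2
    have hd : Lb *ᵥ (l' - linf) = 0 := by
      rw [Matrix.mulVec_sub, h1, hLblinf, sub_self]
    have h3 : linf ⬝ᵥ (l' - linf) = 0 := horth _ hd
    have h4 : l' ⬝ᵥ (l' - linf) = 0 := h2 _ hd
    have h5 : (l' - linf) ⬝ᵥ (l' - linf) = 0 := by
      rw [sub_dotProduct, h3, h4, sub_zero]
    have h6 : l' - linf = 0 := dotProduct_self_eq_zero.mp h5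
    exact sub_eq_zero.mp h6
end

section
/- Let L be the Laplacian of a connected undirected graph on N vertices. For the consensus averaging iteration ζ_{l+1} = v − (L ⊗ I_d)μ_l, μ_{l+1} = μ_l + α(L ⊗ I_d)ζ_{l+1} with 0 < α < 2/σ_max(L)², the sequence ζ_l converges to 1_N ⊗ ((1/N)Σᵢ vᵢ), where v = [v₁; …; v_N]. -/
open Matrix Kronecker Filter

/-- Dual ascent for consensus averaging: the iteration `ζ_{l+1} = v − (L ⊗ I_d)μ_l`,
`μ_{l+1} = μ_l + α(L ⊗ I_d)ζ_{l+1}` with `0 < α < 2/σ_max(L)²` converges to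
`1_N ⊗ ((1/N)Σᵢ vᵢ)`. -/
theorem consensus_averaging_dual_ascent_convergence {N d : ℕ} (hN : 0 < N)
    (a L : Matrix (Fin N) (Fin N) ℝ)
    (hsym : ∀ i j, a i j = a j i)
    (hnn : ∀ i j, 0 ≤ a i j)
    (hdiag : ∀ i, a i i = 0)
    (hconn : ∀ i j : Fin N, Relation.ReflTransGen (fun p q => 0 < a p q) i j)
    (hL : ∀ i j, L i j = if i = j then ∑ k, a i k else -(a i j))
    (σN : ℝ) (hσN : ∀ x : Fin N → ℝ, x ⬝ᵥ (L *ᵥ x) ≤ σN * (x ⬝ᵥ x)) (hσpos : 0 < σN)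
    (Lb : Matrix (Fin N × Fin d) (Fin N × Fin d) ℝ)
    (hLb : Lb = L ⊗ₖ (1 : Matrix (Fin d) (Fin d) ℝ))
    (α : ℝ) (hα : 0 < α) (hαstep : α < 2 / σN ^ 2)
    (v : Fin N × Fin d → ℝ)
    (ζ μ : ℕ → Fin N × Fin d → ℝ)
    (hiter1 : ∀ l, ζ (l + 1) = v - Lb *ᵥ μ l)
    (hiter2 : ∀ l, μ (l + 1) = μ l + α • (Lb *ᵥ ζ (l + 1))) :
    Filter.Tendsto ζ Filter.atTop
      (nhds (fun p => (N : ℝ)⁻¹ * ∑ j, v (j, p.2))) := by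
  classical
  -- basic facts about L
  have hLsym : ∀ i j, L i j = L j i := by
    intro i j
    rw [hL, hL]
    by_cases h : i = j
    · subst h; rfl
    · simp [h, Ne.symm h, hsym i j]
  have hH : L.IsHermitian := by
    ext i j
    simpa [Matrix.conjTranspose_apply] using hLsym j i
  have hrow : ∀ (x : Fin N → ℝ) (i), (L *ᵥ x) i = (∑ k, a i k) * x i - ∑ j, a i j * x j := by
    intro x i
    have h1 : ∀ j, L i j * x j
        = (if i = j then ((∑ k, a i k) + a i j) * x j else 0) - a i j * x j := by
      intro j
      by_cases h : i = j
      · subst h; simp [hL, hdiag]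
      · simp [hL, h]
    simp only [Matrix.mulVec, dotProduct, h1, Finset.sum_sub_distrib,
      Finset.sum_ite_eq, Finset.mem_univ, if_true, hdiag, add_zero]
  have hL1 : L *ᵥ (fun _ => (1 : ℝ)) = 0 := by
    funext i
    simp [hrow]
  have hswap : ∀ x : Fin N → ℝ,
      ∑ i, ∑ j, a i j * (x j) ^ 2 = ∑ i, ∑ j, a i j * (x i) ^ 2 := by
    intro x
    rw [Finset.sum_comm]
    exact Finset.sum_congr rfl fun j _ => Finset.sum_congr rfl fun i _ => by rw [hsym]
  have hquad : ∀ x : Fin N → ℝ,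
      x ⬝ᵥ (L *ᵥ x) = 2⁻¹ * ∑ i, ∑ j, a i j * (x i - x j) ^ 2 := by
    intro x
    have e1 : x ⬝ᵥ (L *ᵥ x) = ∑ i, ∑ j, (a i j * (x i) ^ 2 - a i j * (x i * x j)) := by
      simp only [dotProduct, hrow]
      refine Finset.sum_congr rfl fun i _ => ?_
      rw [mul_sub, Finset.sum_mul, Finset.mul_sum, Finset.mul_sum, ← Finset.sum_sub_distrib]
      exact Finset.sum_congr rfl fun j _ => by ring
    have e2 : ∑ i, ∑ j, a i j * (x i - x j) ^ 2
        = ∑ i, ∑ j, ((a i j * (x i) ^ 2 - 2 * (a i j * (x i * x j))) + a i j * (x j) ^ 2) := by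
      refine Finset.sum_congr rfl fun i _ => Finset.sum_congr rfl fun j _ => by ring
    have e3 : ∑ i, ∑ j, 2 * (a i j * (x i * x j)) = 2 * ∑ i, ∑ j, a i j * (x i * x j) := by
      rw [Finset.mul_sum]
      exact Finset.sum_congr rfl fun i _ => (Finset.mul_sum _ _ _).symm
    rw [e1, e2]
    simp only [Finset.sum_add_distrib, Finset.sum_sub_distrib]
    rw [hswap x, e3]
    ring
  have hPSD : ∀ x : Fin N → ℝ, 0 ≤ x ⬝ᵥ (L *ᵥ x) := by
    intro x
    rw [hquad]
    have : 0 ≤ ∑ i, ∑ j, a i j * (x i - x j) ^ 2 :=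
      Finset.sum_nonneg fun i _ => Finset.sum_nonneg fun j _ =>
        mul_nonneg (hnn i j) (sq_nonneg _)
    positivity
  have hker : ∀ x : Fin N → ℝ, L *ᵥ x = 0 → ∀ i j, x i = x j := by
    intro x hx
    have hq : ∑ i, ∑ j, a i j * (x i - x j) ^ 2 = 0 := by
      have : x ⬝ᵥ (L *ᵥ x) = 0 := by rw [hx]; simp
      rw [hquad] at this
      linarith
    have hterm : ∀ i j, a i j * (x i - x j) ^ 2 = 0 := by
      intro i j
      have h1 := (Finset.sum_eq_zero_iff_of_nonneg (fun i _ =>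
        Finset.sum_nonneg fun j _ => mul_nonneg (hnn i j) (sq_nonneg _))).mp hq i
        (Finset.mem_univ i)
      exact (Finset.sum_eq_zero_iff_of_nonneg (fun j _ =>
        mul_nonneg (hnn i j) (sq_nonneg _))).mp h1 j (Finset.mem_univ j)
    have hstep : ∀ i j, 0 < a i j → x i = x j := by
      intro i j hij
      have h2 : (x i - x j) ^ 2 = 0 := by
        rcases mul_eq_zero.mp (hterm i j) with h | h
        · exact absurd h (ne_of_gt hij)
        · exact h
      have := pow_eq_zero_iff (n := 2) (by norm_num) |>.mp h2
      linarith
    intro i j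
    induction hconn i j with
    | refl => rfl
    | tail _ hbc ih => exact ih.trans (hstep _ _ hbc)
  have hbil : ∀ x y : Fin N → ℝ, x ⬝ᵥ (L *ᵥ y) = y ⬝ᵥ (L *ᵥ x) := by
    intro x y
    simp only [dotProduct, Matrix.mulVec, Finset.mul_sum]
    rw [Finset.sum_comm]
    exact Finset.sum_congr rfl fun j _ => Finset.sum_congr rfl fun i _ => by
      rw [hLsym]; ring
  subst hLb
  -- reduce to columns
  rw [tendsto_pi_nhds]
  rintro ⟨j0, q⟩
  have hblock : ∀ (w : Fin N × Fin d → ℝ) (j : Fin N),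
      ((L ⊗ₖ (1 : Matrix (Fin d) (Fin d) ℝ)) *ᵥ w) (j, q) = ∑ k, L j k * w (k, q) := by
    intro w j
    simp only [Matrix.mulVec, dotProduct, Fintype.sum_prod_type, kroneckerMap_apply,
      Matrix.one_apply, mul_ite, mul_one, mul_zero, ite_mul, zero_mul]
    refine Finset.sum_congr rfl fun k _ => ?_
    simp [Finset.sum_ite_eq, Finset.mem_univ]
  set U : Fin N → ℝ := fun j => v (j, q) with hU
  set X : ℕ → Fin N → ℝ := fun l j => ζ l (j, q) with hX
  set Y : ℕ → Fin N → ℝ := fun l j => μ l (j, q) with hY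
  set T : Fin N → ℝ := fun _ => (N : ℝ)⁻¹ * ∑ j, v (j, q) with hT
  have hXstep : ∀ l, X (l + 1) = U - L *ᵥ Y l := by
    intro l
    funext j
    have h := congrFun (hiter1 l) (j, q)
    simp only [Pi.sub_apply] at h
    rw [hblock] at h
    simpa [hX, hU, hY, Matrix.mulVec, dotProduct] using h
  have hYstep : ∀ l, Y (l + 1) = Y l + α • (L *ᵥ X (l + 1)) := by
    intro l
    funext j
    have h := congrFun (hiter2 l) (j, q)
    simp only [Pi.add_apply, Pi.smul_apply, smul_eq_mul] at h
    rw [hblock] at h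
    simpa [hX, hU, hY, Matrix.mulVec, dotProduct] using h
  set b := hH.eigenvectorBasis with hb
  set ev := hH.eigenvalues with hev
  have heig : ∀ i, L *ᵥ (b i : Fin N → ℝ) = ev i • (b i : Fin N → ℝ) :=
    hH.mulVec_eigenvectorBasis
  have hinner : ∀ (x y : EuclideanSpace ℝ (Fin N)),
      inner ℝ x y = (x : Fin N → ℝ) ⬝ᵥ (y : Fin N → ℝ) := by
    intro x y
    simp [EuclideanSpace.inner_eq_star_dotProduct]
    exact dotProduct_comm _ _
  have hunit : ∀ i, (b i : Fin N → ℝ) ⬝ᵥ (b i : Fin N → ℝ) = 1 := by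
    intro i
    rw [← hinner]
    rw [orthonormal_iff_ite.mp b.orthonormal]
    simp
  have hev_eq : ∀ i, (b i : Fin N → ℝ) ⬝ᵥ (L *ᵥ (b i : Fin N → ℝ)) = ev i := by
    intro i
    rw [heig i, dotProduct_smul, hunit]
    simp
  have hev_nonneg : ∀ i, 0 ≤ ev i := fun i => (hev_eq i) ▸ hPSD _
  have hev_le : ∀ i, ev i ≤ σN := by
    intro i
    have := hσN (b i)
    rw [hev_eq i, hunit i, mul_one] at this
    exact this
  -- coefficient dynamics
  have hdotL : ∀ (i) (z : Fin N → ℝ),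
      (b i : Fin N → ℝ) ⬝ᵥ (L *ᵥ z) = ev i * ((b i : Fin N → ℝ) ⬝ᵥ z) := by
    intro i z
    rw [hbil, heig i, dotProduct_smul, smul_eq_mul, dotProduct_comm]
  have hxc : ∀ i l, (b i : Fin N → ℝ) ⬝ᵥ X (l + 1)
      = (b i : Fin N → ℝ) ⬝ᵥ U - ev i * ((b i : Fin N → ℝ) ⬝ᵥ Y l) := by
    intro i l
    rw [hXstep l, dotProduct_sub, hdotL]
  have hyc : ∀ i l, (b i : Fin N → ℝ) ⬝ᵥ Y (l + 1)
      = (b i : Fin N → ℝ) ⬝ᵥ Y l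
        + α * (ev i * ((b i : Fin N → ℝ) ⬝ᵥ X (l + 1))) := by
    intro i l
    rw [hYstep l, dotProduct_add, dotProduct_smul, hdotL, smul_eq_mul]
  -- coefficient convergence
  have hcoef : ∀ i, Tendsto (fun l => (b i : Fin N → ℝ) ⬝ᵥ X l) atTop
      (nhds ((b i : Fin N → ℝ) ⬝ᵥ T)) := by
    intro i
    by_cases hzero : ev i = 0
    · -- kernel case: b i is constant
      have hbker : L *ᵥ (b i : Fin N → ℝ) = 0 := by
        rw [heig i, hzero]; simp
      have hconst := hker _ hbker
      have hNne : (N : ℝ) ≠ 0 := Nat.cast_ne_zero.mpr hN.ne'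
      have hTc : (b i : Fin N → ℝ) ⬝ᵥ T = (b i : Fin N → ℝ) ⬝ᵥ U := by
        simp only [dotProduct, hT, hU]
        have e1 : ∀ j, (b i : Fin N → ℝ) j * ((N : ℝ)⁻¹ * ∑ k, v (k, q))
            = (N : ℝ)⁻¹ * ((b i : Fin N → ℝ) j0 * ∑ k, v (k, q)) := by
          intro j; rw [hconst j j0]; ring
        have e2 : ∀ j, (b i : Fin N → ℝ) j * v (j, q)
            = (b i : Fin N → ℝ) j0 * v (j, q) := by
          intro j; rw [hconst j j0]
        rw [Finset.sum_congr rfl fun j _ => e1 j, Finset.sum_congr rfl fun j _ => e2 j,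
          Finset.sum_const, Finset.card_univ, Fintype.card_fin, ← Finset.mul_sum,
          nsmul_eq_mul]
        field_simp
      rw [hTc]
      have h1 : Tendsto (fun l => (b i : Fin N → ℝ) ⬝ᵥ X (l + 1)) atTop
          (nhds ((b i : Fin N → ℝ) ⬝ᵥ U)) := by
        have : ∀ l, (b i : Fin N → ℝ) ⬝ᵥ X (l + 1) = (b i : Fin N → ℝ) ⬝ᵥ U := by
          intro l; rw [hxc, hzero]; ring
        simpa [this] using tendsto_const_nhds (α := ℝ) (f := atTop (α := ℕ))
      exact (tendsto_add_atTop_iff_nat 1).mp h1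
    · -- non-kernel case
      have hb1 : (b i : Fin N → ℝ) ⬝ᵥ (fun _ => (1 : ℝ)) = 0 := by
        have h0 : (b i : Fin N → ℝ) ⬝ᵥ (L *ᵥ fun _ => (1 : ℝ)) = 0 := by
          rw [hL1]; simp
        rw [hdotL] at h0
        exact (mul_eq_zero.mp h0).resolve_left hzero
      have hTc : (b i : Fin N → ℝ) ⬝ᵥ T = 0 := by
        simp only [dotProduct, hT]
        have : ∀ j, (b i : Fin N → ℝ) j * ((N : ℝ)⁻¹ * ∑ k, v (k, q))
            = ((N : ℝ)⁻¹ * ∑ k, v (k, q)) * ((b i : Fin N → ℝ) j * 1) := fun j => by ring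
        rw [Finset.sum_congr rfl fun j _ => this j, ← Finset.mul_sum]
        simp only [dotProduct] at hb1
        rw [hb1, mul_zero]
      rw [hTc]
      set uc := (b i : Fin N → ℝ) ⬝ᵥ U with huc
      set r : ℝ := 1 - α * ev i ^ 2 with hr
      set s : ℝ := uc / ev i with hs
      set yc : ℕ → ℝ := fun l => (b i : Fin N → ℝ) ⬝ᵥ Y l with hyc'
      have hycq : ∀ l, yc l = (b i : Fin N → ℝ) ⬝ᵥ Y l := fun l => rfl
      have hycrec : ∀ l, yc (l + 1) = r * yc l + α * ev i * uc := by
        intro l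
        rw [hycq, hycq, hyc i l, hxc i l, hr]
        ring
      have hgeo : ∀ l, yc l - s = r ^ l * (yc 0 - s) := by
        intro l
        induction l with
        | zero => simp
        | succ n ih =>
          rw [hycrec n, pow_succ]
          have hse : ev i * s = uc := by rw [hs]; field_simp
          calc r * yc n + α * ev i * uc - s
              = r * (yc n - s) + (r * s + α * ev i * (ev i * s) - s) := by rw [hse]; ring
            _ = r * (yc n - s) := by rw [hr]; ring
            _ = r ^ n * (yc 0 - s) * r := by rw [ih]; ring
            _ = r ^ n * r * (yc 0 - s) := by ring
      have habs : |r| < 1 := by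
        rw [abs_lt]
        have hev2pos : 0 < ev i ^ 2 := by positivity
        have h1 : ev i ^ 2 ≤ σN ^ 2 := by
          have := hev_le i
          nlinarith [hev_nonneg i]
        have h2 : α * σN ^ 2 < 2 := by
          rw [lt_div_iff₀ (by positivity)] at hαstep
          linarith
        have h3 : α * ev i ^ 2 ≤ α * σN ^ 2 := by nlinarith
        constructor <;> [nlinarith; nlinarith]
      have hyto : Tendsto yc atTop (nhds s) := by
        have h1 : Tendsto (fun l => r ^ l * (yc 0 - s) + s) atTop (nhds (0 * (yc 0 - s) + s)) :=
          (((tendsto_pow_atTop_nhds_zero_of_abs_lt_one habs).mul_const _).add_const s)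
        have h2 : ∀ l, yc l = r ^ l * (yc 0 - s) + s := fun l => by
          have := hgeo l; linarith
        rw [zero_mul, zero_add] at h1
        simpa [← h2] using h1
      have h1 : Tendsto (fun l => (b i : Fin N → ℝ) ⬝ᵥ X (l + 1)) atTop (nhds 0) := by
        have hse : ev i * s = uc := by rw [hs]; field_simp
        have h2 : Tendsto (fun l => uc - ev i * yc l) atTop (nhds (uc - ev i * s)) :=
          tendsto_const_nhds.sub (hyto.const_mul _)
        rw [hse, sub_self] at h2
        have h3 : ∀ l, (b i : Fin N → ℝ) ⬝ᵥ X (l + 1) = uc - ev i * yc l := fun l => hxc i l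
        simpa [h3] using h2
      exact (tendsto_add_atTop_iff_nat 1).mp h1
  -- assemble via basis expansion
  have hexp : ∀ (z : EuclideanSpace ℝ (Fin N)) (j : Fin N),
      z j = ∑ i, ((b i : Fin N → ℝ) ⬝ᵥ (z : Fin N → ℝ)) * (b i : Fin N → ℝ) j := by
    intro z j
    conv_lhs => rw [← b.sum_repr z]
    rw [WithLp.ofLp_sum, Finset.sum_apply]
    refine Finset.sum_congr rfl fun i _ => ?_
    rw [b.repr_apply_apply, hinner]
    rfl
  have h1 : ∀ l, ζ l (j0, q) = ∑ i, ((b i : Fin N → ℝ) ⬝ᵥ X l) * (b i : Fin N → ℝ) j0 :=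
    fun l => hexp (WithLp.toLp 2 (X l)) j0
  have h2 : (N : ℝ)⁻¹ * ∑ j, v (j, q)
      = ∑ i, ((b i : Fin N → ℝ) ⬝ᵥ T) * (b i : Fin N → ℝ) j0 := hexp (WithLp.toLp 2 T) j0
  simp only [h1, h2]
  rw [show (N : ℝ)⁻¹ * Finset.univ.sum U = _ from h2]
  exact tendsto_finset_sum _ fun i _ => (hcoef i).mul_const _
end
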